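/- arXiv:1112.4549 — 5 statements merged into one kernel-verified Lean document; each statement's English description precedes it below -/
import Mathlib

section
/- Let Λ be a finitely aligned k-graph and fix a pair (μ, ν) ∈ Λ × Λ such that μ ≠ ν, s(μ) = s(ν) and r(μ) = r(ν). Then the following are equivalent: (1) (μ, ν) is a generalised cycle; (2) the set Ext(μ; {ν}) is an exhaustive subset of s(μ)Λ; (3) {μx : x ∈ s(μ)∂Λ} ⊆ {νy : y ∈ s(ν)∂Λ}. -/
open scoped ComplexOrder ENat

/-- A higher-rank graph (`k`-graph): a countable small category `Λ` together with a degree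
functor `d : Λ → ℕᵏ` satisfying the unique factorisation property.  Morphisms ("paths") form
the type `Path`; vertices are identified with the paths of degree `0`.  Composition is encoded
as a total function `comp` whose axioms only apply to composable pairs (`s μ = r ν`). -/
structure KGraph (k : ℕ) : Type 1 where
  Path : Type
  countable : Countable Path
  d : Path → Fin k → ℕ
  r : Path → Path
  s : Path → Path
  comp : Path → Path → Path
  d_r : ∀ lam, d (r lam) = 0
  d_s : ∀ lam, d (s lam) = 0
  r_vertex : ∀ v, d v = 0 → r v = v
  s_vertex : ∀ v, d v = 0 → s v = v
  r_comp : ∀ mu nu, s mu = r nu → r (comp mu nu) = r mu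
  s_comp : ∀ mu nu, s mu = r nu → s (comp mu nu) = s nu
  d_comp : ∀ mu nu, s mu = r nu → d (comp mu nu) = d mu + d nu
  comp_assoc : ∀ lam mu nu, s lam = r mu → s mu = r nu →
    comp (comp lam mu) nu = comp lam (comp mu nu)
  id_comp : ∀ lam, comp (r lam) lam = lam
  comp_id : ∀ lam, comp lam (s lam) = lam
  factor : ∀ (lam : Path) (m n : Fin k → ℕ), d lam = m + n →
    ∃! p : Path × Path, d p.1 = m ∧ d p.2 = n ∧ s p.1 = r p.2 ∧ comp p.1 p.2 = lam

namespace KGraph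

variable {k : ℕ} (Λ : KGraph k)

/-- `v` is a vertex, i.e. a path of degree `0`. -/
def IsVertex (v : Λ.Path) : Prop := Λ.d v = 0

/-- The set of minimal common extensions of `mu` and `nu`. -/
def MCE (mu nu : Λ.Path) : Set Λ.Path :=
  {lam | Λ.d lam = Λ.d mu ⊔ Λ.d nu ∧
    (∃ α, Λ.s mu = Λ.r α ∧ Λ.comp mu α = lam) ∧
    (∃ β, Λ.s nu = Λ.r β ∧ Λ.comp nu β = lam)}

/-- Pairs `(α, β)` with `μα = νβ ∈ MCE (μ, ν)`. -/
def MCEPairs (mu nu : Λ.Path) : Set (Λ.Path × Λ.Path) :=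
  {p | Λ.s mu = Λ.r p.1 ∧ Λ.s nu = Λ.r p.2 ∧
    Λ.comp mu p.1 = Λ.comp nu p.2 ∧ Λ.comp mu p.1 ∈ Λ.MCE mu nu}

/-- `Λ` is finitely aligned if all sets of minimal common extensions are finite. -/
def FinitelyAligned : Prop := ∀ mu nu : Λ.Path, (Λ.MCE mu nu).Finite

/-- `Λ` is row-finite if `vΛⁿ` is finite for every vertex `v` and `n ∈ ℕᵏ`. -/
def RowFinite : Prop :=
  ∀ (v : Λ.Path) (n : Fin k → ℕ), Λ.IsVertex v → {lam | Λ.r lam = v ∧ Λ.d lam = n}.Finite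

/-- `Λ` is locally convex. -/
def LocallyConvex : Prop :=
  ∀ i j : Fin k, i ≠ j → ∀ mu : Λ.Path, Λ.d mu = Pi.single i 1 →
    (∃ e, Λ.r e = Λ.r mu ∧ Λ.d e = Pi.single j 1) →
    ∃ e, Λ.r e = Λ.s mu ∧ Λ.d e = Pi.single j 1

/-- A subset `F ⊆ vΛ` is exhaustive if every `λ ∈ vΛ` has a common extension with some
member of `F`. -/
def Exhaustive (v : Λ.Path) (F : Set Λ.Path) : Prop :=
  ∀ lam, Λ.r lam = v → ∃ mu ∈ F, (Λ.MCE lam mu).Nonempty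

/-- A generalised cycle: a pair of distinct paths `μ ≠ ν` with the same range and source such
that every extension of `μ` has a common extension with `ν`. -/
def IsGenCycle (mu nu : Λ.Path) : Prop :=
  mu ≠ nu ∧ Λ.s mu = Λ.s nu ∧ Λ.r mu = Λ.r nu ∧
    ∀ τ, Λ.r τ = Λ.s mu → (Λ.MCE (Λ.comp mu τ) nu).Nonempty

/-- An entrance to the generalised cycle `(μ, ν)`. -/
def IsEntrance (mu nu τ : Λ.Path) : Prop :=
  Λ.r τ = Λ.s nu ∧ Λ.MCE (Λ.comp nu τ) mu = ∅

/-- A (conventional) cycle: a path of nonzero degree whose range and source coincide. -/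
def IsCycle (lam : Λ.Path) : Prop := Λ.d lam ≠ 0 ∧ Λ.r lam = Λ.s lam

/-- `Λ` contains no (conventional) cycles. -/
def NoCycles : Prop := ∀ lam : Λ.Path, Λ.r lam = Λ.s lam → Λ.d lam = 0

/-- A vertex `v` with `vΛ = {v}`. -/
def IsSource (v : Λ.Path) : Prop :=
  Λ.IsVertex v ∧ ∀ lam, Λ.r lam = v → lam = v

/-- `Ext (μ; E)`. -/
def Ext (mu : Λ.Path) (E : Set Λ.Path) : Set Λ.Path :=
  {τ | Λ.r τ = Λ.s mu ∧ ∃ nu ∈ E, Λ.comp mu τ ∈ Λ.MCE mu nu}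

/-- No cycle in `Λ` has an entrance. -/
def NoCycleHasEntrance : Prop :=
  ∀ lam, Λ.IsCycle lam → ∀ τ, Λ.r τ = Λ.r lam → (Λ.MCE τ lam).Nonempty

/-- `x` encodes a path of degree `m ∈ (ℕ ∪ {∞})ᵏ` in `Λ`, i.e. a degree-preserving functor
`Ω_{k,m} → Λ`, recorded as a total function on pairs `(p, q)`; only the values with
`p ≤ q ≤ m` are constrained. -/
def IsPathFun (m : Fin k → ℕ∞) (x : (Fin k → ℕ) → (Fin k → ℕ) → Λ.Path) : Prop :=
  (∀ p q : Fin k → ℕ, p ≤ q → (∀ i, (q i : ℕ∞) ≤ m i) → Λ.d (x p q) = q - p) ∧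
  (∀ p q : Fin k → ℕ, p ≤ q → (∀ i, (q i : ℕ∞) ≤ m i) →
    Λ.r (x p q) = x p p ∧ Λ.s (x p q) = x q q) ∧
  (∀ p q u : Fin k → ℕ, p ≤ q → q ≤ u → (∀ i, (u i : ℕ∞) ≤ m i) →
    Λ.comp (x p q) (x q u) = x p u)

/-- `x` is a boundary path of degree `m`. -/
def IsBoundaryFun (m : Fin k → ℕ∞) (x : (Fin k → ℕ) → (Fin k → ℕ) → Λ.Path) : Prop :=
  Λ.IsPathFun m x ∧
  ∀ p : Fin k → ℕ, (∀ i, (p i : ℕ∞) ≤ m i) →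
    ∀ E : Set Λ.Path, E.Finite → (∀ lam ∈ E, Λ.r lam = x p p) → Λ.Exhaustive (x p p) E →
      ∃ mu ∈ E, (∀ i, ((p i + Λ.d mu i : ℕ) : ℕ∞) ≤ m i) ∧ x p (p + Λ.d mu) = mu

/-- A path function `x` of degree `m` belongs to `Λ^{≤∞}`. -/
def IsLeInftyPath (m : Fin k → ℕ∞) (x : (Fin k → ℕ) → (Fin k → ℕ) → Λ.Path) : Prop :=
  Λ.IsPathFun m x ∧
  ∀ n : Fin k → ℕ, (∀ i, (n i : ℕ∞) ≤ m i) → ∀ i, (n i : ℕ∞) = m i →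
    ∀ e, ¬(Λ.r e = x n n ∧ Λ.d e = Pi.single i 1)

/-- The degree of `τ^∞` for a cycle (or initial cycle) `τ`: `∞` in the coordinates where
`d τ` is nonzero, `0` elsewhere. -/
def degInf (τ : Λ.Path) : Fin k → ℕ∞ := fun i => if Λ.d τ i = 0 then 0 else ⊤

/-- An initial cycle: `r μ = s μ` and `r(μ)Λ^{eᵢ} = ∅` whenever `d(μ)ᵢ = 0`. -/
def IsInitialCycle (mu : Λ.Path) : Prop :=
  Λ.r mu = Λ.s mu ∧
  ∀ i, Λ.d mu i = 0 → ∀ e, ¬(Λ.r e = Λ.r mu ∧ Λ.d e = Pi.single i 1)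

/-- `x` is (the path function of) `μ^∞` for the initial cycle `μ`. -/
def IsInfIterate (mu : Λ.Path) (x : (Fin k → ℕ) → (Fin k → ℕ) → Λ.Path) : Prop :=
  Λ.IsPathFun (Λ.degInf mu) x ∧ x 0 0 = Λ.r mu ∧
    ∀ n : ℕ, x (n • Λ.d mu) ((n + 1) • Λ.d mu) = mu

/-- Membership in `Λ^{≤ n}`. -/
def LePath (n : Fin k → ℕ) (lam : Λ.Path) : Prop :=
  Λ.d lam ≤ n ∧
    ∀ i, Λ.d lam i < n i → ∀ e, ¬(Λ.r e = Λ.s lam ∧ Λ.d e = Pi.single i 1)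

/-- Minimal common extensions computed inside a subset `S` of `Λ` (all data lying in `S`). -/
def MCEWithin (S : Set Λ.Path) (mu nu : Λ.Path) : Set Λ.Path :=
  {lam | lam ∈ S ∧ Λ.d lam = Λ.d mu ⊔ Λ.d nu ∧
    (∃ α ∈ S, Λ.s mu = Λ.r α ∧ Λ.comp mu α = lam) ∧
    (∃ β ∈ S, Λ.s nu = Λ.r β ∧ Λ.comp nu β = lam)}

/-- Generalised cycles of the sub-`k`-graph determined by a subset `S` of `Λ`. -/
def IsGenCycleWithin (S : Set Λ.Path) (mu nu : Λ.Path) : Prop :=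
  mu ≠ nu ∧ Λ.s mu = Λ.s nu ∧ Λ.r mu = Λ.r nu ∧
    ∀ τ ∈ S, Λ.r τ = Λ.s mu → (Λ.MCEWithin S (Λ.comp mu τ) nu).Nonempty

end KGraph

/-- A Cuntz–Krieger `Λ`-family in a `*`-ring `B`: (CK1) the vertex elements are mutually
orthogonal projections, (CK2) multiplicativity, (CK3) the Cuntz–Krieger relation for
`t_μ* t_ν`, and (CK4) the exhaustivity relation (stated for an arbitrary ordering of the
finite exhaustive set). -/
structure CKFamily {k : ℕ} (Λ : KGraph k) (B : Type*) [NonUnitalRing B] [StarRing B] where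
  t : Λ.Path → B
  selfadjoint : ∀ v, Λ.IsVertex v → star (t v) = t v
  idem : ∀ v, Λ.IsVertex v → t v * t v = t v
  orth : ∀ v w, Λ.IsVertex v → Λ.IsVertex w → v ≠ w → t v * t w = 0
  mul_eq : ∀ mu nu, Λ.s mu = Λ.r nu → t mu * t nu = t (Λ.comp mu nu)
  ck3 : ∀ mu nu, star (t mu) * t nu = ∑ᶠ p ∈ Λ.MCEPairs mu nu, t p.1 * star (t p.2)
  ck4 : ∀ v, Λ.IsVertex v → ∀ (a : Λ.Path) (l : List Λ.Path), (a :: l).Nodup →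
    (∀ lam ∈ a :: l, Λ.r lam = v) → Λ.Exhaustive v {lam | lam ∈ a :: l} →
    (l.map fun lam => t v - t lam * star (t lam)).foldl (· * ·)
      (t v - t a * star (t a)) = 0

/-- A C*-algebra is AF (approximately finite-dimensional) if it contains an increasing
sequence of finite-dimensional `*`-subalgebras whose union is dense. -/
def IsAF (A : Type*) [NonUnitalNormedRing A] [StarRing A] [NormedSpace ℂ A] : Prop :=
  ∃ S : ℕ → NonUnitalStarSubalgebra ℂ A, Monotone S ∧
    (∀ n, FiniteDimensional ℂ (S n)) ∧ Dense (⋃ n, (S n : Set A))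

/-- A closed `*`-subalgebra of `A`, presented as a subset `S`, is AF if it contains an
increasing sequence of finite-dimensional `*`-subalgebras of `A` whose union is dense in `S`. -/
def IsAFIn (A : Type*) [NonUnitalNormedRing A] [StarRing A] [NormedSpace ℂ A]
    (S : Set A) : Prop :=
  ∃ T : ℕ → NonUnitalStarSubalgebra ℂ A, Monotone T ∧ (∀ n, (T n : Set A) ⊆ S) ∧
    (∀ n, FiniteDimensional ℂ (T n)) ∧ ∀ x ∈ S, x ∈ closure (⋃ n, (T n : Set A))

/-! ### Auxiliary infrastructure for `stmt8` -/

namespace KGraph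

variable {k : ℕ} (Λ : KGraph k)

lemma pi_le {f g : Fin k → ℕ} (h : ∀ i, f i ≤ g i) : f ≤ g := h

lemma le_pi {f g : Fin k → ℕ} (h : f ≤ g) : ∀ i, f i ≤ g i := h

open Classical in
/-- The canonical splitting of a path at degree `a`. -/
noncomputable def split (ρ : Λ.Path) (a : Fin k → ℕ) : Λ.Path × Λ.Path :=
  if h : a ≤ Λ.d ρ then
    (Λ.factor ρ a (Λ.d ρ - a) (funext fun i => (Nat.add_sub_cancel' (h i)).symm)).exists.choose
  else (ρ, ρ)

/-- Prefix of `ρ` of degree `a`. -/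
noncomputable def pre (ρ : Λ.Path) (a : Fin k → ℕ) : Λ.Path := (Λ.split ρ a).1

/-- Suffix of `ρ` from degree `a` on. -/
noncomputable def suf (ρ : Λ.Path) (a : Fin k → ℕ) : Λ.Path := (Λ.split ρ a).2

variable {Λ}

lemma split_spec {ρ : Λ.Path} {a : Fin k → ℕ} (h : a ≤ Λ.d ρ) :
    Λ.d (Λ.pre ρ a) = a ∧ Λ.d (Λ.suf ρ a) = Λ.d ρ - a ∧
      Λ.s (Λ.pre ρ a) = Λ.r (Λ.suf ρ a) ∧ Λ.comp (Λ.pre ρ a) (Λ.suf ρ a) = ρ := by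
  have := (Λ.factor ρ a (Λ.d ρ - a)
    (funext fun i => (Nat.add_sub_cancel' (h i)).symm)).exists.choose_spec
  simpa [pre, suf, split, dif_pos h] using this

lemma d_pre {ρ : Λ.Path} {a : Fin k → ℕ} (h : a ≤ Λ.d ρ) : Λ.d (Λ.pre ρ a) = a :=
  (split_spec h).1

lemma d_suf {ρ : Λ.Path} {a : Fin k → ℕ} (h : a ≤ Λ.d ρ) : Λ.d (Λ.suf ρ a) = Λ.d ρ - a :=
  (split_spec h).2.1

lemma s_pre {ρ : Λ.Path} {a : Fin k → ℕ} (h : a ≤ Λ.d ρ) :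
    Λ.s (Λ.pre ρ a) = Λ.r (Λ.suf ρ a) := (split_spec h).2.2.1

lemma comp_pre_suf {ρ : Λ.Path} {a : Fin k → ℕ} (h : a ≤ Λ.d ρ) :
    Λ.comp (Λ.pre ρ a) (Λ.suf ρ a) = ρ := (split_spec h).2.2.2

/-- Uniqueness of the splitting. -/
lemma split_eq {ρ π₁ π₂ : Λ.Path} (h2 : Λ.s π₁ = Λ.r π₂) (h3 : Λ.comp π₁ π₂ = ρ) :
    π₁ = Λ.pre ρ (Λ.d π₁) ∧ π₂ = Λ.suf ρ (Λ.d π₁) := by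
  have hd : Λ.d ρ = Λ.d π₁ + Λ.d π₂ := by rw [← h3, Λ.d_comp _ _ h2]
  have hle : Λ.d π₁ ≤ Λ.d ρ := pi_le fun i => by
    have := congrFun hd i; simp only [Pi.add_apply] at this; omega
  have huniq := (Λ.factor ρ (Λ.d π₁) (Λ.d ρ - Λ.d π₁)
    (funext fun i => (Nat.add_sub_cancel' (hle i)).symm))
  have h1 : (π₁, π₂) = (Λ.pre ρ (Λ.d π₁), Λ.suf ρ (Λ.d π₁)) := by
    have hfact : Λ.d (π₁, π₂).1 = Λ.d π₁ ∧ Λ.d (π₁, π₂).2 = Λ.d ρ - Λ.d π₁ ∧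
        Λ.s (π₁, π₂).1 = Λ.r (π₁, π₂).2 ∧ Λ.comp (π₁, π₂).1 (π₁, π₂).2 = ρ :=
      ⟨rfl, funext fun i => by
          have := congrFun hd i; simp only [Pi.add_apply] at this
          simp only [Pi.sub_apply]; omega,
        h2, h3⟩
    have hs := split_spec hle
    have hfact' : Λ.d (Λ.pre ρ (Λ.d π₁), Λ.suf ρ (Λ.d π₁)).1 = Λ.d π₁ ∧
        Λ.d (Λ.pre ρ (Λ.d π₁), Λ.suf ρ (Λ.d π₁)).2 = Λ.d ρ - Λ.d π₁ ∧
        Λ.s (Λ.pre ρ (Λ.d π₁), Λ.suf ρ (Λ.d π₁)).1 = Λ.r (Λ.pre ρ (Λ.d π₁), Λ.suf ρ (Λ.d π₁)).2 ∧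
        Λ.comp (Λ.pre ρ (Λ.d π₁), Λ.suf ρ (Λ.d π₁)).1 (Λ.pre ρ (Λ.d π₁), Λ.suf ρ (Λ.d π₁)).2 = ρ :=
      ⟨hs.1, hs.2.1, hs.2.2.1, hs.2.2.2⟩
    exact huniq.unique hfact hfact'
  exact ⟨congrArg Prod.fst h1, congrArg Prod.snd h1⟩

lemma pre_of_comp {π₁ π₂ : Λ.Path} (h2 : Λ.s π₁ = Λ.r π₂) :
    Λ.pre (Λ.comp π₁ π₂) (Λ.d π₁) = π₁ := ((split_eq h2 rfl).1).symm

lemma suf_of_comp {π₁ π₂ : Λ.Path} (h2 : Λ.s π₁ = Λ.r π₂) :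
    Λ.suf (Λ.comp π₁ π₂) (Λ.d π₁) = π₂ := ((split_eq h2 rfl).2).symm

lemma r_pre {ρ : Λ.Path} {a : Fin k → ℕ} (h : a ≤ Λ.d ρ) : Λ.r (Λ.pre ρ a) = Λ.r ρ := by
  conv_rhs => rw [← comp_pre_suf h]
  rw [Λ.r_comp _ _ (s_pre h)]

lemma s_suf {ρ : Λ.Path} {a : Fin k → ℕ} (h : a ≤ Λ.d ρ) : Λ.s (Λ.suf ρ a) = Λ.s ρ := by
  conv_rhs => rw [← comp_pre_suf h]
  rw [Λ.s_comp _ _ (s_pre h)]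

lemma pre_zero (ρ : Λ.Path) : Λ.pre ρ 0 = Λ.r ρ := by
  have h2 : Λ.s (Λ.r ρ) = Λ.r ρ := Λ.s_vertex _ (Λ.d_r ρ)
  have := (split_eq (ρ := ρ) (π₁ := Λ.r ρ) (π₂ := ρ) h2 (Λ.id_comp ρ)).1
  rwa [Λ.d_r, eq_comm] at this

lemma suf_zero (ρ : Λ.Path) : Λ.suf ρ 0 = ρ := by
  have h2 : Λ.s (Λ.r ρ) = Λ.r ρ := Λ.s_vertex _ (Λ.d_r ρ)
  have := (split_eq (ρ := ρ) (π₁ := Λ.r ρ) (π₂ := ρ) h2 (Λ.id_comp ρ)).2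
  rwa [Λ.d_r, eq_comm] at this

lemma pre_d_self (ρ : Λ.Path) : Λ.pre ρ (Λ.d ρ) = ρ := by
  have h2 : Λ.s ρ = Λ.r (Λ.s ρ) := (Λ.r_vertex _ (Λ.d_s ρ)).symm
  exact (split_eq (ρ := ρ) (π₁ := ρ) (π₂ := Λ.s ρ) h2 (Λ.comp_id ρ)).1.symm

lemma suf_d_self (ρ : Λ.Path) : Λ.suf ρ (Λ.d ρ) = Λ.s ρ := by
  have h2 : Λ.s ρ = Λ.r (Λ.s ρ) := (Λ.r_vertex _ (Λ.d_s ρ)).symm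
  exact (split_eq (ρ := ρ) (π₁ := ρ) (π₂ := Λ.s ρ) h2 (Λ.comp_id ρ)).2.symm

lemma pre_pre {ρ : Λ.Path} {a b : Fin k → ℕ} (hb : b ≤ a) (ha : a ≤ Λ.d ρ) :
    Λ.pre (Λ.pre ρ a) b = Λ.pre ρ b := by
  have hdπ : Λ.d (Λ.pre ρ a) = a := d_pre ha
  have hb' : b ≤ Λ.d (Λ.pre ρ a) := hb.trans_eq hdπ.symm
  have hc1 : Λ.s (Λ.pre (Λ.pre ρ a) b) = Λ.r (Λ.suf (Λ.pre ρ a) b) := s_pre hb'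
  have hc2 : Λ.s (Λ.suf (Λ.pre ρ a) b) = Λ.r (Λ.suf ρ a) := by
    rw [s_suf hb']; exact s_pre ha
  have h3 : Λ.comp (Λ.pre (Λ.pre ρ a) b) (Λ.comp (Λ.suf (Λ.pre ρ a) b) (Λ.suf ρ a)) = ρ := by
    rw [← Λ.comp_assoc _ _ _ hc1 hc2, comp_pre_suf hb', comp_pre_suf ha]
  have hs' : Λ.s (Λ.pre (Λ.pre ρ a) b) = Λ.r (Λ.comp (Λ.suf (Λ.pre ρ a) b) (Λ.suf ρ a)) := by
    rw [Λ.r_comp _ _ hc2]; exact hc1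
  have h4 := (split_eq hs' h3).1
  rw [d_pre hb'] at h4; exact h4

lemma comp_pre {ρ : Λ.Path} {a b : Fin k → ℕ} (hab : a ≤ b) (hb : b ≤ Λ.d ρ) :
    Λ.comp (Λ.pre ρ a) (Λ.pre (Λ.suf ρ a) (b - a)) = Λ.pre ρ b ∧
      Λ.suf (Λ.suf ρ a) (b - a) = Λ.suf ρ b := by
  have ha : a ≤ Λ.d ρ := le_trans hab hb
  have hdσ : Λ.d (Λ.suf ρ a) = Λ.d ρ - a := d_suf ha
  have hba : b - a ≤ Λ.d (Λ.suf ρ a) := pi_le fun i => by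
    simp only [hdσ, Pi.sub_apply]; have h1 := le_pi hab i; have h2 := le_pi hb i; omega
  have hc1 : Λ.s (Λ.pre ρ a) = Λ.r (Λ.pre (Λ.suf ρ a) (b - a)) := by
    rw [r_pre hba]; exact s_pre ha
  have hdπ : Λ.d (Λ.comp (Λ.pre ρ a) (Λ.pre (Λ.suf ρ a) (b - a))) = b := by
    rw [Λ.d_comp _ _ hc1, d_pre ha, d_pre hba]
    funext i; simp only [Pi.add_apply, Pi.sub_apply]; have := le_pi hab i; omega
  have hc2 : Λ.s (Λ.pre (Λ.suf ρ a) (b - a)) = Λ.r (Λ.suf (Λ.suf ρ a) (b - a)) := s_pre hba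
  have hfull : Λ.comp (Λ.comp (Λ.pre ρ a) (Λ.pre (Λ.suf ρ a) (b - a)))
      (Λ.suf (Λ.suf ρ a) (b - a)) = ρ := by
    rw [Λ.comp_assoc _ _ _ hc1 hc2, comp_pre_suf hba, comp_pre_suf ha]
  have hsπ : Λ.s (Λ.comp (Λ.pre ρ a) (Λ.pre (Λ.suf ρ a) (b - a))) =
      Λ.r (Λ.suf (Λ.suf ρ a) (b - a)) := by
    rw [Λ.s_comp _ _ hc1]; exact hc2
  have h4 := split_eq hsπ hfull
  rw [hdπ] at h4
  exact ⟨h4.1, h4.2⟩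

lemma suf_suf {ρ : Λ.Path} {a b : Fin k → ℕ} (hab : a ≤ b) (hb : b ≤ Λ.d ρ) :
    Λ.suf (Λ.suf ρ a) (b - a) = Λ.suf ρ b := (comp_pre hab hb).2

lemma pre_comp_left {X Y : Λ.Path} {b : Fin k → ℕ} (hxy : Λ.s X = Λ.r Y) (hb : b ≤ Λ.d X) :
    Λ.pre (Λ.comp X Y) b = Λ.pre X b ∧ Λ.suf (Λ.comp X Y) b = Λ.comp (Λ.suf X b) Y := by
  have hc : Λ.s (Λ.suf X b) = Λ.r Y := by rw [s_suf hb]; exact hxy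
  have h3 : Λ.comp (Λ.pre X b) (Λ.comp (Λ.suf X b) Y) = Λ.comp X Y := by
    rw [← Λ.comp_assoc _ _ _ (s_pre hb) hc, comp_pre_suf hb]
  have hs' : Λ.s (Λ.pre X b) = Λ.r (Λ.comp (Λ.suf X b) Y) := by
    rw [Λ.r_comp _ _ hc]; exact s_pre hb
  have h4 := split_eq hs' h3
  rw [d_pre hb] at h4
  exact ⟨h4.1.symm, h4.2.symm⟩

variable (Λ) in
/-- The segment of `ρ` between degrees `p` and `q`. -/
noncomputable def seg (ρ : Λ.Path) (p q : Fin k → ℕ) : Λ.Path := Λ.pre (Λ.suf ρ p) (q - p)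

lemma sub_le_d_suf {ρ : Λ.Path} {p q : Fin k → ℕ} (hpq : p ≤ q) (hq : q ≤ Λ.d ρ) :
    q - p ≤ Λ.d (Λ.suf ρ p) := pi_le fun i => by
  simp only [d_suf (le_trans hpq hq), Pi.sub_apply]
  have h1 := le_pi hpq i; have h2 := le_pi hq i; omega

lemma d_seg {ρ : Λ.Path} {p q : Fin k → ℕ} (hpq : p ≤ q) (hq : q ≤ Λ.d ρ) :
    Λ.d (Λ.seg ρ p q) = q - p := d_pre (sub_le_d_suf hpq hq)

lemma seg_self {ρ : Λ.Path} {p : Fin k → ℕ} (_hp : p ≤ Λ.d ρ) :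
    Λ.seg ρ p p = Λ.r (Λ.suf ρ p) := by
  rw [seg, show p - p = (0 : Fin k → ℕ) from funext fun i => by simp, pre_zero]

lemma d_seg_self {ρ : Λ.Path} {p : Fin k → ℕ} (hp : p ≤ Λ.d ρ) : Λ.d (Λ.seg ρ p p) = 0 := by
  rw [seg_self hp, Λ.d_r]

lemma r_seg {ρ : Λ.Path} {p q : Fin k → ℕ} (hpq : p ≤ q) (hq : q ≤ Λ.d ρ) :
    Λ.r (Λ.seg ρ p q) = Λ.seg ρ p p := by
  rw [seg, r_pre (sub_le_d_suf hpq hq), seg_self (le_trans hpq hq)]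

lemma s_seg {ρ : Λ.Path} {p q : Fin k → ℕ} (hpq : p ≤ q) (hq : q ≤ Λ.d ρ) :
    Λ.s (Λ.seg ρ p q) = Λ.seg ρ q q := by
  rw [seg, s_pre (sub_le_d_suf hpq hq), suf_suf hpq hq, seg_self hq]

lemma comp_seg {ρ : Λ.Path} {p q u : Fin k → ℕ} (hpq : p ≤ q) (hqu : q ≤ u)
    (hu : u ≤ Λ.d ρ) : Λ.comp (Λ.seg ρ p q) (Λ.seg ρ q u) = Λ.seg ρ p u := by
  have h1 : q - p ≤ u - p := pi_le fun i => by
    simp only [Pi.sub_apply]; have h2 := le_pi hqu i; have h3 := le_pi hpq i; omega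
  have h2 : u - p ≤ Λ.d (Λ.suf ρ p) := sub_le_d_suf (le_trans hpq hqu) hu
  have := (comp_pre h1 h2).1
  rw [suf_suf hpq (le_trans hqu hu)] at this
  rw [show (u - p) - (q - p) = u - q from funext fun i => by
    simp only [Pi.sub_apply]; have h2 := le_pi hpq i; have h3 := le_pi hqu i; omega] at this
  exact this

lemma seg_comp_left {X Y : Λ.Path} {p q : Fin k → ℕ} (hxy : Λ.s X = Λ.r Y) (hpq : p ≤ q)
    (hq : q ≤ Λ.d X) : Λ.seg (Λ.comp X Y) p q = Λ.seg X p q := by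
  have hp : p ≤ Λ.d X := le_trans hpq hq
  have hc : Λ.s (Λ.suf X p) = Λ.r Y := by rw [s_suf hp]; exact hxy
  rw [seg, seg, (pre_comp_left hxy hp).2,
    (pre_comp_left hc (sub_le_d_suf hpq hq)).1]

lemma seg_zero_left {ρ : Λ.Path} {q : Fin k → ℕ} : Λ.seg ρ 0 q = Λ.pre ρ q := by
  rw [seg, suf_zero, show q - (0 : Fin k → ℕ) = q from funext fun i => by simp]

lemma mce_of_pre {ξ σ τ : Λ.Path} (hσ : Λ.pre ξ (Λ.d σ) = σ) (hτ : Λ.pre ξ (Λ.d τ) = τ)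
    (hle : Λ.d σ ⊔ Λ.d τ ≤ Λ.d ξ) : Λ.pre ξ (Λ.d σ ⊔ Λ.d τ) ∈ Λ.MCE σ τ := by
  have key : ∀ π : Λ.Path, Λ.pre ξ (Λ.d π) = π → Λ.d π ≤ Λ.d σ ⊔ Λ.d τ →
      ∃ α, Λ.s π = Λ.r α ∧ Λ.comp π α = Λ.pre ξ (Λ.d σ ⊔ Λ.d τ) := by
    intro π hπ hπle
    have hηd : Λ.d (Λ.pre ξ (Λ.d σ ⊔ Λ.d τ)) = Λ.d σ ⊔ Λ.d τ := d_pre hle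
    have hπη : Λ.d π ≤ Λ.d (Λ.pre ξ (Λ.d σ ⊔ Λ.d τ)) := hπle.trans_eq hηd.symm
    refine ⟨Λ.suf (Λ.pre ξ (Λ.d σ ⊔ Λ.d τ)) (Λ.d π), ?_, ?_⟩
    · have h5 := s_pre hπη
      rwa [pre_pre hπle hle, hπ] at h5
    · have h5 := comp_pre_suf hπη
      rwa [pre_pre hπle hle, hπ] at h5
  exact ⟨d_pre hle, key σ hσ le_sup_left, key τ hτ le_sup_right⟩

lemma comp_cancel_left {γ τ₁ τ₂ : Λ.Path} (h1 : Λ.s γ = Λ.r τ₁) (h2 : Λ.s γ = Λ.r τ₂)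
    (h : Λ.comp γ τ₁ = Λ.comp γ τ₂) : τ₁ = τ₂ := by
  have e1 := suf_of_comp h1
  have e2 := suf_of_comp h2
  rw [h] at e1
  exact e1.symm.trans e2

lemma ext_exhaustive' {γ : Λ.Path} {E : Set Λ.Path}
    (hE : ∀ σ, Λ.r σ = Λ.s γ → ∃ μ' ∈ E, (Λ.MCE (Λ.comp γ σ) μ').Nonempty) :
    Λ.Exhaustive (Λ.s γ) (Λ.Ext γ E) := by
  intro σ hσ
  have hc : Λ.s γ = Λ.r σ := hσ.symm
  obtain ⟨μ', hμ'E, ξ, hdξ, ⟨α, hα1, hα2⟩, ⟨β, hβ1, hβ2⟩⟩ := hE σ hσ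
  have hσα : Λ.s σ = Λ.r α := by rw [← hα1, Λ.s_comp _ _ hc]
  have hρc : Λ.s γ = Λ.r (Λ.comp σ α) := by rw [Λ.r_comp _ _ hσα]; exact hc
  have hξρ : Λ.comp γ (Λ.comp σ α) = ξ := by rw [← Λ.comp_assoc _ _ _ hc hσα, hα2]
  have hdρ : Λ.d (Λ.comp σ α) = Λ.d σ + Λ.d α := Λ.d_comp _ _ hσα
  have hdξ' : Λ.d ξ = Λ.d γ + Λ.d (Λ.comp σ α) := by rw [← hξρ, Λ.d_comp _ _ hρc]
  have hdγσ : Λ.d (Λ.comp γ σ) = Λ.d γ + Λ.d σ := Λ.d_comp _ _ hc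
  have hpreγ : Λ.pre ξ (Λ.d γ) = γ := by rw [← hξρ]; exact pre_of_comp hρc
  have hpreμ' : Λ.pre ξ (Λ.d μ') = μ' := by rw [← hβ2]; exact pre_of_comp hβ1
  have hsuple : Λ.d γ ⊔ Λ.d μ' ≤ Λ.d ξ := pi_le fun i => by
    have a1 := congrFun hdξ i; have a2 := congrFun hdγσ i
    simp only [Pi.sup_apply, Pi.add_apply] at a1 a2 ⊢
    omega
  have hmceη := mce_of_pre hpreγ hpreμ' hsuple
  have hsufγ : Λ.suf ξ (Λ.d γ) = Λ.comp σ α := by rw [← hξρ]; exact suf_of_comp hρc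
  set c := Λ.d γ ⊔ Λ.d μ' with hcdef
  set τ := Λ.pre (Λ.comp σ α) (c - Λ.d γ) with hτdef
  have hγc : Λ.d γ ≤ c := le_sup_left
  have hcξ : c ≤ Λ.d ξ := hsuple
  have hτle : c - Λ.d γ ≤ Λ.d (Λ.comp σ α) := pi_le fun i => by
    have a1 := congrFun hdξ' i; have a2 := congrFun hcdef i
    have a3 := le_pi hcξ i
    simp only [Pi.sup_apply, Pi.add_apply, Pi.sub_apply] at a1 a2 a3 ⊢
    omega
  have hcompγτ : Λ.comp γ τ = Λ.pre ξ c := by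
    have h5 := (comp_pre hγc hcξ).1
    rwa [hpreγ, hsufγ, ← hτdef] at h5
  have hdτ : Λ.d τ = c - Λ.d γ := by rw [hτdef]; exact d_pre hτle
  refine ⟨τ, ⟨?_, μ', hμ'E, ?_⟩, ?_⟩
  · rw [hτdef, r_pre hτle, Λ.r_comp _ _ hσα, hσ]
  · rw [hcompγτ]; exact hmceη
  · have hpreσ : Λ.pre (Λ.comp σ α) (Λ.d σ) = σ := pre_of_comp hσα
    have hpreτ : Λ.pre (Λ.comp σ α) (Λ.d τ) = τ := by rw [hdτ]
    have hsup2 : Λ.d σ ⊔ Λ.d τ ≤ Λ.d (Λ.comp σ α) := pi_le fun i => by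
      have a1 := congrFun hdξ i; have a2 := congrFun hdγσ i
      have a3 := congrFun hdξ' i; have a4 := congrFun hdτ i
      have a5 := congrFun hcdef i
      simp only [Pi.sup_apply, Pi.add_apply, Pi.sub_apply] at a1 a2 a3 a4 a5 ⊢
      omega
    exact ⟨_, mce_of_pre hpreσ hpreτ hsup2⟩

lemma ext_exhaustive {γ : Λ.Path} {E : Set Λ.Path} (hE : Λ.Exhaustive (Λ.r γ) E) :
    Λ.Exhaustive (Λ.s γ) (Λ.Ext γ E) :=
  ext_exhaustive' fun σ hσ => hE _ (Λ.r_comp _ _ hσ.symm)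

lemma ext_finite (hFA : Λ.FinitelyAligned) (γ : Λ.Path) {E : Set Λ.Path} (hE : E.Finite) :
    (Λ.Ext γ E).Finite := by
  apply Set.Finite.of_finite_image (f := Λ.comp γ)
  · apply Set.Finite.subset (Set.Finite.biUnion hE fun μ' _ => hFA γ μ')
    rintro _ ⟨τ, ⟨hr, μ', hμ', hmce⟩, rfl⟩
    exact Set.mem_biUnion hμ' hmce
  · intro τ₁ h1 τ₂ h2 h
    exact comp_cancel_left h1.1.symm h2.1.symm h

lemma genCycle_to_exhaustive {mu nu : Λ.Path} (hgc : Λ.IsGenCycle mu nu) :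
    Λ.Exhaustive (Λ.s mu) (Λ.Ext mu {nu}) :=
  ext_exhaustive' fun σ hσ => ⟨nu, rfl, hgc.2.2.2 σ hσ⟩

lemma exhaustive_to_genCycle {mu nu : Λ.Path} (hne : mu ≠ nu) (hs : Λ.s mu = Λ.s nu)
    (hr : Λ.r mu = Λ.r nu) (hex : Λ.Exhaustive (Λ.s mu) (Λ.Ext mu {nu})) :
    Λ.IsGenCycle mu nu := by
  refine ⟨hne, hs, hr, fun τ hτ => ?_⟩
  obtain ⟨τ', ⟨hrτ', nu', hnu', hmceτ'⟩, ζ, hdζ, ⟨α, hα1, hα2⟩, ⟨β, hβ1, hβ2⟩⟩ := hex τ hτ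
  obtain rfl : nu' = nu := hnu'
  obtain ⟨hdμτ', _, β', hβ'1, hβ'2⟩ := hmceτ'
  have hμτ : Λ.s mu = Λ.r τ := hτ.symm
  have hμτ' : Λ.s mu = Λ.r τ' := hrτ'.symm
  have hrζ : Λ.r ζ = Λ.s mu := by rw [← hα2, Λ.r_comp _ _ hα1]; exact hτ
  have hc : Λ.s mu = Λ.r ζ := hrζ.symm
  have h1 : Λ.s (Λ.comp mu τ) = Λ.r α := by rw [Λ.s_comp _ _ hμτ]; exact hα1
  have e1 : Λ.comp mu ζ = Λ.comp (Λ.comp mu τ) α := by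
    rw [← hα2, ← Λ.comp_assoc _ _ _ hμτ hα1]
  have p1 : Λ.pre (Λ.comp mu ζ) (Λ.d (Λ.comp mu τ)) = Λ.comp mu τ := by
    rw [e1]; exact pre_of_comp h1
  have h2 : Λ.s (Λ.comp mu τ') = Λ.r β := by rw [Λ.s_comp _ _ hμτ']; exact hβ1
  have e2 : Λ.comp mu ζ = Λ.comp (Λ.comp mu τ') β := by
    rw [← hβ2, ← Λ.comp_assoc _ _ _ hμτ' hβ1]
  have hβ'β : Λ.s β' = Λ.r β := by
    rw [show Λ.s β' = Λ.s (Λ.comp nu' β') from (Λ.s_comp nu' β' hβ'1).symm, hβ'2]; exact h2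
  have hnucomp : Λ.s nu' = Λ.r (Λ.comp β' β) := by rw [Λ.r_comp _ _ hβ'β]; exact hβ'1
  have e3 : Λ.comp mu ζ = Λ.comp nu' (Λ.comp β' β) := by
    rw [e2, ← hβ'2, Λ.comp_assoc _ _ _ hβ'1 hβ'β]
  have p2 : Λ.pre (Λ.comp mu ζ) (Λ.d nu') = nu' := by rw [e3]; exact pre_of_comp hnucomp
  have hdξ : Λ.d (Λ.comp mu ζ) = Λ.d mu + Λ.d ζ := Λ.d_comp _ _ hc
  have hdμτ : Λ.d (Λ.comp mu τ) = Λ.d mu + Λ.d τ := Λ.d_comp _ _ hμτ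
  have hdμτ'2 : Λ.d (Λ.comp mu τ') = Λ.d mu + Λ.d τ' := Λ.d_comp _ _ hμτ'
  have hsup : Λ.d (Λ.comp mu τ) ⊔ Λ.d nu' ≤ Λ.d (Λ.comp mu ζ) := pi_le fun i => by
    have a1 := congrFun hdξ i; have a2 := congrFun hdμτ i
    have a3 := congrFun hdμτ'2 i; have a4 := congrFun hdμτ' i
    have a5 := congrFun hdζ i
    simp only [Pi.sup_apply, Pi.add_apply] at a1 a2 a3 a4 a5 ⊢
    omega
  exact ⟨_, mce_of_pre p1 p2 hsup⟩

lemma shift_pathFun {M : Fin k → ℕ∞} {z : (Fin k → ℕ) → (Fin k → ℕ) → Λ.Path}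
    (hz : Λ.IsPathFun M z) {b : Fin k → ℕ} (hb : ∀ i, (b i : ℕ∞) ≤ M i) :
    Λ.IsPathFun (fun i => M i - b i) (fun p q => z (b + p) (b + q)) := by
  obtain ⟨hd, hrs, hcomp⟩ := hz
  have key : ∀ q : Fin k → ℕ, (∀ i, (q i : ℕ∞) ≤ M i - b i) →
      ∀ i, (((b + q) i : ℕ) : ℕ∞) ≤ M i := by
    intro q hq i
    have h1 : (b i : ℕ∞) + (q i : ℕ∞) ≤ (b i : ℕ∞) + (M i - (b i : ℕ∞)) :=
      add_le_add_right (hq i) _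
    rw [add_tsub_cancel_of_le (hb i)] at h1
    calc (((b + q) i : ℕ) : ℕ∞) = (b i : ℕ∞) + (q i : ℕ∞) := by
          simp [Pi.add_apply]
      _ ≤ M i := h1
  refine ⟨?_, ?_, ?_⟩
  · intro p q hpq hq
    rw [hd (b + p) (b + q) (add_le_add_right hpq b) (key q hq)]
    funext i; simp only [Pi.add_apply, Pi.sub_apply]; omega
  · intro p q hpq hq
    exact hrs (b + p) (b + q) (add_le_add_right hpq b) (key q hq)
  · intro p q u hpq hqu hu
    exact hcomp (b + p) (b + q) (b + u) (add_le_add_right hpq b) (add_le_add_right hqu b)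
      (key u hu)

lemma shift_boundaryFun {M : Fin k → ℕ∞} {z : (Fin k → ℕ) → (Fin k → ℕ) → Λ.Path}
    (hz : Λ.IsBoundaryFun M z) {b : Fin k → ℕ} (hb : ∀ i, (b i : ℕ∞) ≤ M i) :
    Λ.IsBoundaryFun (fun i => M i - b i) (fun p q => z (b + p) (b + q)) := by
  refine ⟨shift_pathFun hz.1 hb, ?_⟩
  intro p hp E hEfin hEr hEex
  have hbp : ∀ i, (((b + p) i : ℕ) : ℕ∞) ≤ M i := by
    intro i
    have h1 : (b i : ℕ∞) + (p i : ℕ∞) ≤ (b i : ℕ∞) + (M i - (b i : ℕ∞)) :=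
      add_le_add_right (hp i) _
    rw [add_tsub_cancel_of_le (hb i)] at h1
    calc (((b + p) i : ℕ) : ℕ∞) = (b i : ℕ∞) + (p i : ℕ∞) := by simp [Pi.add_apply]
      _ ≤ M i := h1
  obtain ⟨μ', hμ'E, hdeg, hseg⟩ := hz.2 (b + p) hbp E hEfin hEr hEex
  refine ⟨μ', hμ'E, ?_, ?_⟩
  · intro i
    have h1 := hdeg i
    have h2 : (b i : ℕ∞) + ((p i + Λ.d μ' i : ℕ) : ℕ∞) = (((b + p) i + Λ.d μ' i : ℕ) : ℕ∞) := by
      push_cast [Pi.add_apply]; ring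
    exact ENat.le_sub_of_add_le_left (ENat.coe_ne_top (b i)) (h2.le.trans h1)
  · show z (b + p) (b + (p + Λ.d μ')) = μ'
    rw [← add_assoc]; exact hseg

lemma prepend_boundary (hFA : Λ.FinitelyAligned) {m : Fin k → ℕ∞}
    {x z : (Fin k → ℕ) → (Fin k → ℕ) → Λ.Path} {a : Fin k → ℕ}
    (hx : Λ.IsBoundaryFun m x)
    (hz : Λ.IsPathFun (fun i => (a i : ℕ∞) + m i) z)
    (hzx : ∀ p q, p ≤ q → (∀ i, (q i : ℕ∞) ≤ m i) → z (a + p) (a + q) = x p q) :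
    Λ.IsBoundaryFun (fun i => (a i : ℕ∞) + m i) z := by
  refine ⟨hz, ?_⟩
  intro P hP E hEfin hEr hEex
  obtain ⟨hzd, hzrs, hzcomp⟩ := hz
  set Q := P ⊔ a with hQ
  have hPQ : P ≤ Q := le_sup_left
  have haQ : a ≤ Q := le_sup_right
  have hQle : ∀ i, (Q i : ℕ∞) ≤ (a i : ℕ∞) + m i := by
    intro i
    have hQi : Q i = max (P i) (a i) := rfl
    rcases le_total (P i) (a i) with h | h
    · rw [hQi, max_eq_right h]; exact le_self_add
    · rw [hQi, max_eq_left h]; exact hP i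
  set p₀ := Q - a with hp₀
  have hap₀ : a + p₀ = Q := by
    funext i; simp only [Pi.add_apply, Pi.sub_apply, hp₀]
    have := le_pi haQ i; omega
  have hp₀m : ∀ i, (p₀ i : ℕ∞) ≤ m i := by
    intro i
    have hQeq : a i + p₀ i = Q i := by
      have h3 := congrFun hap₀ i; simpa [Pi.add_apply] using h3
    have h1 : (a i : ℕ∞) + (p₀ i : ℕ∞) = (Q i : ℕ∞) := by
      rw [← hQeq]; push_cast; ring
    exact (WithTop.add_le_add_iff_left (ENat.coe_ne_top (a i))).1 (h1.le.trans (hQle i))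
  have hdγ : Λ.d (z P Q) = Q - P := hzd P Q hPQ hQle
  have hrγ : Λ.r (z P Q) = z P P := (hzrs P Q hPQ hQle).1
  have hsγ : Λ.s (z P Q) = z Q Q := (hzrs P Q hPQ hQle).2
  have hvert : z Q Q = x p₀ p₀ := by
    have h2 := hzx p₀ p₀ le_rfl hp₀m; rwa [hap₀] at h2
  have hE'ex : Λ.Exhaustive (Λ.s (z P Q)) (Λ.Ext (z P Q) E) :=
    ext_exhaustive (by rw [hrγ]; exact hEex)
  have hE'fin := ext_finite hFA (z P Q) hEfin
  have hE'r : ∀ lam ∈ Λ.Ext (z P Q) E, Λ.r lam = x p₀ p₀ := fun lam hl => by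
    rw [hl.1, hsγ, hvert]
  have hE'ex' : Λ.Exhaustive (x p₀ p₀) (Λ.Ext (z P Q) E) := by
    rw [← hvert, ← hsγ]; exact hE'ex
  obtain ⟨τ, hτE', hτdeg, hτseg⟩ := hx.2 p₀ hp₀m (Λ.Ext (z P Q) E) hE'fin hE'r hE'ex'
  obtain ⟨hrτ, μ', hμ'E, hmce⟩ := hτE'
  obtain ⟨hdmce, -, β, hβ1, hβ2⟩ := hmce
  have hQτle : ∀ i, (((Q + Λ.d τ) i : ℕ) : ℕ∞) ≤ (a i : ℕ∞) + m i := by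
    intro i
    have h1 := hτdeg i
    have h2 : (((Q + Λ.d τ) i : ℕ) : ℕ∞) = (a i : ℕ∞) + ((p₀ i + Λ.d τ i : ℕ) : ℕ∞) := by
      rw [show (Q + Λ.d τ) i = a i + (p₀ i + Λ.d τ i) from by
        have := congrFun hap₀ i
        simp only [Pi.add_apply] at this ⊢
        omega]
      push_cast; ring
    rw [h2]
    exact add_le_add_right h1 _
  have hzQτ : z Q (Q + Λ.d τ) = τ := by
    have h2 := hzx p₀ (p₀ + Λ.d τ) le_self_add
      (fun i => by simpa [Pi.add_apply] using hτdeg i)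
    rw [← add_assoc, hap₀] at h2
    rw [h2]; exact hτseg
  have hγτ : Λ.comp (z P Q) τ = z P (Q + Λ.d τ) := by
    have h2 := hzcomp P Q (Q + Λ.d τ) hPQ le_self_add hQτle
    rwa [hzQτ] at h2
  have hdγτsup : Λ.d (Λ.comp (z P Q) τ) = Λ.d (z P Q) ⊔ Λ.d μ' := hdmce
  have hdγτ : Λ.d (Λ.comp (z P Q) τ) = Λ.d (z P Q) + Λ.d τ := Λ.d_comp _ _ hrτ.symm
  have hPμ'le : P + Λ.d μ' ≤ Q + Λ.d τ := pi_le fun i => by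
    have a1 := congrFun hdγτsup i; have a2 := congrFun hdγτ i
    have a3 := congrFun hdγ i; have a4 := le_pi hPQ i
    simp only [Pi.sup_apply, Pi.add_apply, Pi.sub_apply] at a1 a2 a3 ⊢
    omega
  have hPμ'cast : ∀ i, (((P + Λ.d μ') i : ℕ) : ℕ∞) ≤ (a i : ℕ∞) + m i := fun i =>
    le_trans (Nat.cast_le.2 (le_pi hPμ'le i)) (hQτle i)
  have hpre1 : Λ.pre (z P (Q + Λ.d τ)) (Λ.d μ') = μ' := by
    rw [← hγτ, ← hβ2]; exact pre_of_comp hβ1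
  have hcc : Λ.s (z P (P + Λ.d μ')) = Λ.r (z (P + Λ.d μ') (Q + Λ.d τ)) := by
    rw [(hzrs P (P + Λ.d μ') le_self_add hPμ'cast).2,
      (hzrs (P + Λ.d μ') (Q + Λ.d τ) hPμ'le hQτle).1]
  have hpre2 : Λ.pre (z P (Q + Λ.d τ)) (Λ.d (z P (P + Λ.d μ'))) = z P (P + Λ.d μ') := by
    rw [← hzcomp P (P + Λ.d μ') (Q + Λ.d τ) le_self_add hPμ'le hQτle]
    exact pre_of_comp hcc
  have hdz : Λ.d (z P (P + Λ.d μ')) = Λ.d μ' := by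
    rw [hzd P (P + Λ.d μ') le_self_add hPμ'cast]
    funext i; simp only [Pi.add_apply, Pi.sub_apply]; omega
  rw [hdz] at hpre2
  refine ⟨μ', hμ'E, ?_, hpre2.symm.trans hpre1⟩
  intro i
  have h2 : (P i + Λ.d μ' i : ℕ) = (P + Λ.d μ') i := rfl
  rw [h2]; exact hPμ'cast i

lemma pathFun_pre {M : Fin k → ℕ∞} {z : (Fin k → ℕ) → (Fin k → ℕ) → Λ.Path}
    (hz : Λ.IsPathFun M z) {p q u : Fin k → ℕ} (hpq : p ≤ q) (hqu : q ≤ u)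
    (hu : ∀ i, (u i : ℕ∞) ≤ M i) : Λ.pre (z p u) (q - p) = z p q := by
  have hqM : ∀ i, (q i : ℕ∞) ≤ M i := fun i =>
    le_trans (Nat.cast_le.2 (le_pi hqu i)) (hu i)
  have hcomp := hz.2.2 p q u hpq hqu hu
  have hcc : Λ.s (z p q) = Λ.r (z q u) := by
    rw [(hz.2.1 p q hpq hqM).2, (hz.2.1 q u hqu hu).1]
  have h1 := pre_of_comp hcc
  rw [hcomp, hz.1 p q hpq hqM] at h1
  exact h1

lemma exists_nat_le_of_le_iSup {g : ℕ → ℕ} {q : ℕ} (h : (q : ℕ∞) ≤ ⨆ n, (g n : ℕ∞)) :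
    ∃ n, q ≤ g n := by
  by_contra hc
  push_neg at hc
  have hb : ∀ n, (g n : ℕ∞) ≤ ((q - 1 : ℕ) : ℕ∞) := fun n =>
    Nat.cast_le.2 (by have := hc n; omega)
  have h2 := Nat.cast_le.1 (h.trans (iSup_le hb))
  have h0 := hc 0
  omega

open Classical in
variable (Λ) in
/-- One step of the boundary-path construction. -/
noncomputable def step (ρ : Λ.Path) (e : (Fin k → ℕ) × List Λ.Path) : Λ.Path :=
  if h : e.1 ≤ Λ.d ρ ∧ (Λ.Ext (Λ.suf ρ e.1) {lam | lam ∈ e.2}).Nonempty then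
    Λ.comp ρ h.2.choose
  else ρ

lemma step_extend (ρ : Λ.Path) (e : (Fin k → ℕ) × List Λ.Path) :
    ∃ w, Λ.s ρ = Λ.r w ∧ Λ.comp ρ w = Λ.step ρ e := by
  unfold step
  split_ifs with h
  · refine ⟨h.2.choose, ?_, rfl⟩
    have hspec := h.2.choose_spec
    have h1 := hspec.1
    rw [s_suf h.1] at h1
    exact h1.symm
  · exact ⟨Λ.s ρ, (Λ.r_vertex _ (Λ.d_s ρ)).symm, Λ.comp_id ρ⟩

variable (Λ) in
/-- The chain of paths in the boundary-path construction. -/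
noncomputable def chain (start : Λ.Path) (sched : ℕ → (Fin k → ℕ) × List Λ.Path) :
    ℕ → Λ.Path
  | 0 => start
  | n + 1 => Λ.step (chain start sched n) (sched n)

section Chain

variable {start : Λ.Path} {sched : ℕ → (Fin k → ℕ) × List Λ.Path}

lemma chain_extend {n n' : ℕ} (h : n ≤ n') :
    ∃ w, Λ.s (Λ.chain start sched n) = Λ.r w ∧
      Λ.comp (Λ.chain start sched n) w = Λ.chain start sched n' := by
  induction n', h using Nat.le_induction with
  | base =>
    exact ⟨Λ.s (Λ.chain start sched n), (Λ.r_vertex _ (Λ.d_s _)).symm, Λ.comp_id _⟩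
  | succ n' hn ih =>
    obtain ⟨w, hw1, hw2⟩ := ih
    obtain ⟨w', hw'1, hw'2⟩ := step_extend (Λ.chain start sched n') (sched n')
    refine ⟨Λ.comp w w', ?_, ?_⟩
    · rw [Λ.r_comp _ _ (by rw [← hw2] at hw'1; rwa [Λ.s_comp _ _ hw1] at hw'1)]
      exact hw1
    · rw [← Λ.comp_assoc _ _ _ hw1 (by rw [← hw2] at hw'1; rwa [Λ.s_comp _ _ hw1] at hw'1),
        hw2]
      exact hw'2

lemma chain_d_le {n n' : ℕ} (h : n ≤ n') :
    Λ.d (Λ.chain start sched n) ≤ Λ.d (Λ.chain start sched n') := by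
  obtain ⟨w, hw1, hw2⟩ := chain_extend h
  rw [← hw2, Λ.d_comp _ _ hw1]
  exact pi_le fun i => by simp only [Pi.add_apply]; omega

variable (Λ start sched) in
/-- The degree of the limit path of the chain. -/
noncomputable def chainDeg : Fin k → ℕ∞ := fun i => ⨆ n, (Λ.d (Λ.chain start sched n) i : ℕ∞)

open Classical in
variable (Λ start sched) in
/-- The limit path function of the chain. -/
noncomputable def chainFun (p q : Fin k → ℕ) : Λ.Path :=
  if h : ∃ n, q ≤ Λ.d (Λ.chain start sched n) then
    Λ.seg (Λ.chain start sched h.choose) p q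
  else start

lemma chainFun_eq {p q : Fin k → ℕ} {n : ℕ} (hpq : p ≤ q)
    (hn : q ≤ Λ.d (Λ.chain start sched n)) :
    Λ.chainFun start sched p q = Λ.seg (Λ.chain start sched n) p q := by
  have hex : ∃ n', q ≤ Λ.d (Λ.chain start sched n') := ⟨n, hn⟩
  rw [chainFun, dif_pos hex]
  have hN : q ≤ Λ.d (Λ.chain start sched hex.choose) := hex.choose_spec
  rcases le_total hex.choose n with h | h
  · obtain ⟨w, hw1, hw2⟩ := chain_extend (start := start) (sched := sched) h
    rw [← hw2, seg_comp_left hw1 hpq hN]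
  · obtain ⟨w, hw1, hw2⟩ := chain_extend (start := start) (sched := sched) h
    rw [← hw2, seg_comp_left hw1 hpq hn]

lemma exists_chain_ge {q : Fin k → ℕ} (hq : ∀ i, (q i : ℕ∞) ≤ Λ.chainDeg start sched i) :
    ∃ n, q ≤ Λ.d (Λ.chain start sched n) := by
  have hpt : ∀ i, ∃ n, q i ≤ Λ.d (Λ.chain start sched n) i := fun i =>
    exists_nat_le_of_le_iSup (hq i)
  choose g hg using hpt
  exact ⟨Finset.univ.sup g, pi_le fun i =>
    le_trans (hg i) (le_pi (chain_d_le (Finset.le_sup (Finset.mem_univ i))) i)⟩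

lemma le_chainDeg (n : ℕ) (i : Fin k) :
    (Λ.d (Λ.chain start sched n) i : ℕ∞) ≤ Λ.chainDeg start sched i :=
  le_iSup (fun n => (Λ.d (Λ.chain start sched n) i : ℕ∞)) n

lemma chainFun_pathFun : Λ.IsPathFun (Λ.chainDeg start sched) (Λ.chainFun start sched) := by
  refine ⟨?_, ?_, ?_⟩
  · intro p q hpq hq
    obtain ⟨n, hn⟩ := exists_chain_ge hq
    rw [chainFun_eq hpq hn]
    exact d_seg hpq hn
  · intro p q hpq hq
    obtain ⟨n, hn⟩ := exists_chain_ge hq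
    rw [chainFun_eq hpq hn, chainFun_eq le_rfl (le_trans hpq hn), chainFun_eq le_rfl hn]
    exact ⟨r_seg hpq hn, s_seg hpq hn⟩
  · intro p q u hpq hqu hu
    obtain ⟨n, hn⟩ := exists_chain_ge hu
    rw [chainFun_eq hpq (le_trans hqu hn), chainFun_eq hqu hn,
      chainFun_eq (le_trans hpq hqu) hn]
    exact comp_seg hpq hqu hn

lemma chainFun_start : Λ.chainFun start sched 0 (Λ.d start) = start := by
  have h0 : Λ.d start ≤ Λ.d (Λ.chain start sched 0) := le_rfl
  rw [chainFun_eq (pi_le fun i => by simp) h0]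
  show Λ.seg start 0 (Λ.d start) = start
  rw [seg_zero_left, pre_d_self]

end Chain

lemma exists_boundary_from (hFA : Λ.FinitelyAligned) (start : Λ.Path) :
    ∃ (M : Fin k → ℕ∞) (z : (Fin k → ℕ) → (Fin k → ℕ) → Λ.Path),
      Λ.IsBoundaryFun M z ∧ (∀ i, (Λ.d start i : ℕ∞) ≤ M i) ∧
      z 0 (Λ.d start) = start := by
  haveI := Λ.countable
  obtain ⟨f, hf⟩ := exists_surjective_nat ((Fin k → ℕ) × List Λ.Path)
  set sched : ℕ → (Fin k → ℕ) × List Λ.Path := fun n => f (Nat.unpair n).1 with hsched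
  have hsched_prop : ∀ (e : (Fin k → ℕ) × List Λ.Path) (N : ℕ), ∃ n, N ≤ n ∧ sched n = e := by
    intro e N
    obtain ⟨m, hm⟩ := hf e
    exact ⟨Nat.pair m N, Nat.right_le_pair m N, by simp [hsched, Nat.unpair_pair, hm]⟩
  refine ⟨Λ.chainDeg start sched, Λ.chainFun start sched, ⟨chainFun_pathFun, ?_⟩,
    fun i => le_chainDeg 0 i, chainFun_start⟩
  intro P hP E hEfin hEr hEex
  set l := hEfin.toFinset.toList with hl
  have hlE : {lam | lam ∈ l} = E := by
    ext lam
    simp [hl, Finset.mem_toList, Set.Finite.mem_toFinset]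
  obtain ⟨n₀, hn₀⟩ := exists_chain_ge hP
  obtain ⟨n, hnn₀, hsn⟩ := hsched_prop (P, l) n₀
  have hPn : P ≤ Λ.d (Λ.chain start sched n) := le_trans hn₀ (chain_d_le hnn₀)
  -- the vertex of the chain at `P` is `z P P`
  have hzPP : Λ.chainFun start sched P P = Λ.seg (Λ.chain start sched n) P P :=
    chainFun_eq le_rfl hPn
  have hrγ : Λ.r (Λ.suf (Λ.chain start sched n) P) = Λ.chainFun start sched P P := by
    rw [hzPP, seg_self hPn]
  -- the guard of `step` holds at stage `n`
  have hguard : P ≤ Λ.d (Λ.chain start sched n) ∧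
      (Λ.Ext (Λ.suf (Λ.chain start sched n) P) {lam | lam ∈ l}).Nonempty := by
    refine ⟨hPn, ?_⟩
    have hex : Λ.Exhaustive (Λ.s (Λ.suf (Λ.chain start sched n) P))
        (Λ.Ext (Λ.suf (Λ.chain start sched n) P) {lam | lam ∈ l}) := by
      rw [hlE]
      exact ext_exhaustive (by rw [hrγ]; exact hEex)
    obtain ⟨τ, hτ, -⟩ := hex (Λ.s (Λ.suf (Λ.chain start sched n) P))
      (Λ.r_vertex _ (Λ.d_s _))
    exact ⟨τ, hτ⟩
  classical
  have hstep : Λ.chain start sched (n + 1) =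
      Λ.comp (Λ.chain start sched n) hguard.2.choose := by
    show Λ.step (Λ.chain start sched n) (sched n) = _
    rw [hsn]
    exact dif_pos hguard
  have hspec := hguard.2.choose_spec
  set τ := hguard.2.choose with hτdef
  obtain ⟨hrτ, μ', hμ'l, hmce⟩ := hspec
  obtain ⟨hdmce, -, β, hβ1, hβ2⟩ := hmce
  have hμ'E : μ' ∈ E := hlE ▸ hμ'l
  have hγτc : Λ.s (Λ.suf (Λ.chain start sched n) P) = Λ.r τ := hrτ.symm
  have hsχ : Λ.s (Λ.chain start sched n) = Λ.r τ := by rw [← s_suf hPn]; exact hγτc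
  have hd' : Λ.d (Λ.chain start sched (n + 1)) =
      Λ.d (Λ.chain start sched n) + Λ.d τ := by
    rw [hstep, Λ.d_comp _ _ hsχ]
  have hpsγ : Λ.s (Λ.pre (Λ.chain start sched n) P) = Λ.r (Λ.suf (Λ.chain start sched n) P) :=
    s_pre hPn
  have hsufρ' : Λ.suf (Λ.chain start sched (n + 1)) P =
      Λ.comp (Λ.suf (Λ.chain start sched n) P) τ := by
    have hcc : Λ.s (Λ.pre (Λ.chain start sched n) P) =
        Λ.r (Λ.comp (Λ.suf (Λ.chain start sched n) P) τ) := by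
      rw [Λ.r_comp _ _ hγτc]; exact hpsγ
    have hcomp : Λ.comp (Λ.pre (Λ.chain start sched n) P)
        (Λ.comp (Λ.suf (Λ.chain start sched n) P) τ) = Λ.chain start sched (n + 1) := by
      rw [← Λ.comp_assoc _ _ _ hpsγ hγτc, comp_pre_suf hPn, hstep]
    have h4 := (split_eq hcc hcomp).2
    rw [d_pre hPn] at h4
    exact h4.symm
  have hdγ : Λ.d (Λ.suf (Λ.chain start sched n) P) = Λ.d (Λ.chain start sched n) - P :=
    d_suf hPn
  have hdγτ : Λ.d (Λ.comp (Λ.suf (Λ.chain start sched n) P) τ) =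
      Λ.d (Λ.suf (Λ.chain start sched n) P) + Λ.d τ := Λ.d_comp _ _ hγτc
  have hPμ' : P + Λ.d μ' ≤ Λ.d (Λ.chain start sched (n + 1)) := pi_le fun i => by
    have a1 := congrFun hdmce i; have a2 := congrFun hdγτ i
    have a3 := congrFun hdγ i; have a4 := congrFun hd' i
    have a5 := le_pi hPn i
    simp only [Pi.sup_apply, Pi.add_apply, Pi.sub_apply] at a1 a2 a3 a4 ⊢
    omega
  have hzval : Λ.chainFun start sched P (P + Λ.d μ') = μ' := by
    rw [chainFun_eq le_self_add hPμ', seg, hsufρ',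
      show P + Λ.d μ' - P = Λ.d μ' from funext fun i => by
        simp only [Pi.add_apply, Pi.sub_apply]; omega,
      ← hβ2, pre_of_comp hβ1]
  refine ⟨μ', hμ'E, ?_, hzval⟩
  intro i
  calc ((P i + Λ.d μ' i : ℕ) : ℕ∞) ≤ (Λ.d (Λ.chain start sched (n + 1)) i : ℕ∞) :=
        Nat.cast_le.2 (le_pi hPμ' i)
    _ ≤ _ := le_chainDeg (n + 1) i

lemma pisub_zero (q : Fin k → ℕ) : q - 0 = q := funext fun i => by simp

lemma pizero_le (p : Fin k → ℕ) : (0 : Fin k → ℕ) ≤ p := pi_le fun i => by simp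

end KGraph

/-- Lemma 3.2. For distinct `μ, ν` with common range and source in a
finitely aligned `k`-graph, the following are equivalent: (1) `(μ, ν)` is a generalised
cycle; (2) `Ext(μ; {ν})` is exhaustive in `s(μ)Λ`; (3) every boundary path extending `μ`
extends `ν`, i.e. `{μx : x ∈ s(μ)∂Λ} ⊆ {νy : y ∈ s(ν)∂Λ}` (the path `μx` being
characterised by `d(μx) = d(μ) + d(x)`, `(μx)(0, d μ) = μ` and `σ^{d μ}(μx) = x`). -/
theorem stmt8 {k : ℕ} (Λ : KGraph k) (hFA : Λ.FinitelyAligned)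
    (mu nu : Λ.Path) (hne : mu ≠ nu) (hs : Λ.s mu = Λ.s nu) (hr : Λ.r mu = Λ.r nu) :
    (Λ.IsGenCycle mu nu ↔ Λ.Exhaustive (Λ.s mu) (Λ.Ext mu {nu})) ∧
    (Λ.IsGenCycle mu nu ↔
      ∀ (m : Fin k → ℕ∞) (x : (Fin k → ℕ) → (Fin k → ℕ) → Λ.Path),
        Λ.IsBoundaryFun m x → x 0 0 = Λ.s mu →
        ∀ z : (Fin k → ℕ) → (Fin k → ℕ) → Λ.Path,
          Λ.IsPathFun (fun i => (Λ.d mu i : ℕ∞) + m i) z →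
          z 0 (Λ.d mu) = mu →
          (∀ p q : Fin k → ℕ, p ≤ q → (∀ i, (q i : ℕ∞) ≤ m i) →
            z (Λ.d mu + p) (Λ.d mu + q) = x p q) →
          ∃ (m' : Fin k → ℕ∞) (y : (Fin k → ℕ) → (Fin k → ℕ) → Λ.Path),
            Λ.IsBoundaryFun m' y ∧ y 0 0 = Λ.s nu ∧
            (∀ i, (Λ.d nu i : ℕ∞) + m' i = (Λ.d mu i : ℕ∞) + m i) ∧
            z 0 (Λ.d nu) = nu ∧
            ∀ p q : Fin k → ℕ, p ≤ q → (∀ i, (q i : ℕ∞) ≤ m' i) →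
              z (Λ.d nu + p) (Λ.d nu + q) = y p q) := by
  open KGraph in
  refine ⟨⟨genCycle_to_exhaustive, exhaustive_to_genCycle hne hs hr⟩, ?_, ?_⟩
  · -- (1) ⇒ (3)
    intro hgc m x hx hx0 z hz hzmu hzx
    have hexh := genCycle_to_exhaustive hgc
    have hEfin : (Λ.Ext mu {nu}).Finite := ext_finite hFA mu (Set.finite_singleton nu)
    have hEr : ∀ lam ∈ Λ.Ext mu {nu}, Λ.r lam = x 0 0 := fun lam hl => by rw [hl.1, hx0]
    have h00 : ∀ i, ((0 : Fin k → ℕ) i : ℕ∞) ≤ m i := fun i => by simp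
    have hexh' : Λ.Exhaustive (x 0 0) (Λ.Ext mu {nu}) := by rw [hx0]; exact hexh
    obtain ⟨τ, hτE, hτdeg, hτseg⟩ := hx.2 0 h00 (Λ.Ext mu {nu}) hEfin hEr hexh'
    obtain ⟨hrτ, nu', hnu', hmce⟩ := hτE
    obtain rfl : nu' = nu := hnu'
    obtain ⟨hdmce, -, β, hβ1, hβ2⟩ := hmce
    have hτseg' : x 0 (Λ.d τ) = τ := by rwa [zero_add] at hτseg
    have hτdeg' : ∀ i, (Λ.d τ i : ℕ∞) ≤ m i := fun i => by simpa using hτdeg i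
    have hzτ0 := hzx 0 (Λ.d τ) (pizero_le _) hτdeg'
    rw [add_zero, hτseg'] at hzτ0
    -- hzτ0 : z (d mu) (d mu + d τ) = τ
    have hMτ : ∀ i, (((Λ.d mu + Λ.d τ) i : ℕ) : ℕ∞) ≤ (Λ.d mu i : ℕ∞) + m i := fun i => by
      rw [show (((Λ.d mu + Λ.d τ) i : ℕ) : ℕ∞) = (Λ.d mu i : ℕ∞) + (Λ.d τ i : ℕ∞) by
        simp [Pi.add_apply]]
      exact add_le_add_right (hτdeg' i) _
    have hcompz := hz.2.2 0 (Λ.d mu) (Λ.d mu + Λ.d τ) (pizero_le _) le_self_add hMτ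
    have hzfull : z 0 (Λ.d mu + Λ.d τ) = Λ.comp mu τ := by
      rw [← hcompz, hzmu, hzτ0]
    have hdx : Λ.d (Λ.comp mu τ) = Λ.d mu ⊔ Λ.d nu' := hdmce
    have hdx2 : Λ.d (Λ.comp mu τ) = Λ.d mu + Λ.d τ := Λ.d_comp _ _ hrτ.symm
    have hνle : Λ.d nu' ≤ Λ.d mu + Λ.d τ := pi_le fun i => by
      have a1 := congrFun hdx i; have a2 := congrFun hdx2 i
      simp only [Pi.sup_apply, Pi.add_apply] at a1 a2 ⊢; omega
    have hpreν : Λ.pre (z 0 (Λ.d mu + Λ.d τ)) (Λ.d nu') = nu' := by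
      rw [hzfull, ← hβ2]; exact pre_of_comp hβ1
    have hzν : z 0 (Λ.d nu') = nu' := by
      have h1 := pathFun_pre hz (pizero_le _) hνle hMτ
      rw [pisub_zero] at h1
      exact h1.symm.trans hpreν
    have hνM : ∀ i, (Λ.d nu' i : ℕ∞) ≤ (Λ.d mu i : ℕ∞) + m i := fun i =>
      le_trans (Nat.cast_le.2 (le_pi hνle i)) (hMτ i)
    have hzbd : Λ.IsBoundaryFun (fun i => (Λ.d mu i : ℕ∞) + m i) z :=
      prepend_boundary hFA hx hz hzx
    have hybd := shift_boundaryFun hzbd (b := Λ.d nu') hνM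
    refine ⟨fun i => ((Λ.d mu i : ℕ∞) + m i) - (Λ.d nu' i : ℕ∞),
      fun p q => z (Λ.d nu' + p) (Λ.d nu' + q), hybd, ?_, ?_, hzν, fun p q _ _ => rfl⟩
    · show z (Λ.d nu' + 0) (Λ.d nu' + 0) = Λ.s nu'
      rw [add_zero, ← (hz.2.1 0 (Λ.d nu') (pizero_le _) hνM).2, hzν]
    · exact fun i => add_tsub_cancel_of_le (hνM i)
  · -- (3) ⇒ (1)
    intro h3
    refine ⟨hne, hs, hr, fun τ₀ hτ₀ => ?_⟩
    obtain ⟨M, z, hzbd, hdsM, hzstart⟩ := exists_boundary_from hFA (Λ.comp mu τ₀)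
    have hμτc : Λ.s mu = Λ.r τ₀ := hτ₀.symm
    have hdstart : Λ.d (Λ.comp mu τ₀) = Λ.d mu + Λ.d τ₀ := Λ.d_comp _ _ hμτc
    have hdμle : Λ.d mu ≤ Λ.d (Λ.comp mu τ₀) := pi_le fun i => by
      have := congrFun hdstart i; simp only [Pi.add_apply] at this; omega
    have hdμM : ∀ i, (Λ.d mu i : ℕ∞) ≤ M i := fun i =>
      le_trans (Nat.cast_le.2 (le_pi hdμle i)) (hdsM i)
    have hMm : ∀ i, (Λ.d mu i : ℕ∞) + (M i - (Λ.d mu i : ℕ∞)) = M i := fun i =>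
      add_tsub_cancel_of_le (hdμM i)
    have hxbd := shift_boundaryFun hzbd hdμM
    have hpre := pathFun_pre hzbd.1 (pizero_le _) hdμle hdsM
    rw [pisub_zero, hzstart] at hpre
    have hzμ : z 0 (Λ.d mu) = mu := hpre.symm.trans (pre_of_comp hμτc)
    have hx00 : z (Λ.d mu + 0) (Λ.d mu + 0) = Λ.s mu := by
      rw [add_zero, ← (hzbd.1.2.1 0 (Λ.d mu) (pizero_le _) hdμM).2, hzμ]
    have hz' : Λ.IsPathFun (fun i => (Λ.d mu i : ℕ∞) + (M i - (Λ.d mu i : ℕ∞))) z := by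
      rw [show (fun i => (Λ.d mu i : ℕ∞) + (M i - (Λ.d mu i : ℕ∞))) = M from funext hMm]
      exact hzbd.1
    obtain ⟨m', y, hy, hy0, hm', hzν, hyz⟩ := h3 (fun i => M i - (Λ.d mu i : ℕ∞))
      (fun p q => z (Λ.d mu + p) (Λ.d mu + q)) hxbd hx00 z hz' hzμ (fun p q _ _ => rfl)
    have hνM : ∀ i, (Λ.d nu i : ℕ∞) ≤ M i := fun i =>
      calc (Λ.d nu i : ℕ∞) ≤ (Λ.d nu i : ℕ∞) + m' i := le_self_add
        _ = M i := (hm' i).trans (hMm i)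
    have hc : ∀ i, ((Λ.d (Λ.comp mu τ₀) ⊔ Λ.d nu) i : ℕ∞) ≤ M i := fun i => by
      simp only [Pi.sup_apply]
      rcases le_total (Λ.d (Λ.comp mu τ₀) i) (Λ.d nu i) with h | h
      · rw [sup_eq_right.2 h]; exact hνM i
      · rw [sup_eq_left.2 h]; exact hdsM i
    have hp1 : Λ.pre (z 0 (Λ.d (Λ.comp mu τ₀) ⊔ Λ.d nu)) (Λ.d (Λ.comp mu τ₀)) =
        Λ.comp mu τ₀ := by
      have h1 := pathFun_pre hzbd.1 (pizero_le _)
        (le_sup_left : Λ.d (Λ.comp mu τ₀) ≤ Λ.d (Λ.comp mu τ₀) ⊔ Λ.d nu) hc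
      rw [pisub_zero, hzstart] at h1
      exact h1
    have hp2 : Λ.pre (z 0 (Λ.d (Λ.comp mu τ₀) ⊔ Λ.d nu)) (Λ.d nu) = nu := by
      have h1 := pathFun_pre hzbd.1 (pizero_le _)
        (le_sup_right : Λ.d nu ≤ Λ.d (Λ.comp mu τ₀) ⊔ Λ.d nu) hc
      rw [pisub_zero, hzν] at h1
      exact h1
    have hsup : Λ.d (Λ.comp mu τ₀) ⊔ Λ.d nu ≤ Λ.d (z 0 (Λ.d (Λ.comp mu τ₀) ⊔ Λ.d nu)) := by
      rw [hzbd.1.1 0 _ (pizero_le _) hc, pisub_zero]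
    exact ⟨_, mce_of_pre hp1 hp2 hsup⟩
end

section
/- Let Λ be a 1-graph (i.e. a k-graph with k = 1). Suppose that (μ, ν) is a generalised cycle in Λ. Then there is a conventional cycle λ ∈ Λ ∖ Λ⁰, i.e. a path λ of nonzero degree with r(λ) = s(λ), such that either μ = νλ or ν = μλ. -/
open scoped ComplexOrder ENat

/-- Lemma 3.3. In a `1`-graph, every generalised cycle `(μ, ν)` comes from
a conventional cycle: `μ = νλ` or `ν = μλ` for some cycle `λ`. -/
theorem stmt9 (Λ : KGraph 1) (mu nu : Λ.Path) (hgc : Λ.IsGenCycle mu nu) :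
    ∃ lam : Λ.Path, Λ.IsCycle lam ∧ Λ.r lam = Λ.s nu ∧
      (mu = Λ.comp nu lam ∨ nu = Λ.comp mu lam) := by
  obtain ⟨hne, hs, hr, hext⟩ := hgc
  have hv : Λ.d (Λ.s mu) = 0 := Λ.d_s mu
  have hrs : Λ.r (Λ.s mu) = Λ.s mu := Λ.r_vertex _ hv
  obtain ⟨lam, hdlam, ⟨α, hα1, hα2⟩, ⟨β, hβ1, hβ2⟩⟩ := hext (Λ.s mu) hrs
  rw [Λ.comp_id mu] at hdlam hα1 hα2
  have hdα : Λ.d mu + Λ.d α = Λ.d mu ⊔ Λ.d nu := by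
    rw [← Λ.d_comp mu α hα1, hα2, hdlam]
  have hdβ : Λ.d nu + Λ.d β = Λ.d mu ⊔ Λ.d nu := by
    rw [← Λ.d_comp nu β hβ1, hβ2, hdlam]
  have vert : ∀ (ρ σ : Λ.Path), Λ.s ρ = Λ.r σ → Λ.d σ = 0 → Λ.comp ρ σ = ρ := by
    intro ρ σ h h0
    have : σ = Λ.s ρ := by rw [h, Λ.r_vertex σ h0]
    rw [this, Λ.comp_id]
  have fin1 : ∀ (x : Fin 1 → ℕ), x 0 = 0 → x = 0 := by
    intro x h
    funext i
    have : i = 0 := Subsingleton.elim i 0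
    rw [this, h]; rfl
  rcases lt_trichotomy (Λ.d mu 0) (Λ.d nu 0) with hlt | heq | hgt
  · -- d μ < d ν : β vertex, lam = ν = μ α, α cycle
    have hsup : Λ.d mu ⊔ Λ.d nu = Λ.d nu := by
      funext i
      have : i = 0 := Subsingleton.elim i 0
      subst this
      simpa using le_of_lt hlt
    rw [hsup] at hdα hdβ
    have hβ0 : Λ.d β = 0 := by
      apply fin1
      have := congrFun hdβ 0
      simp only [Pi.add_apply] at this
      omega
    have hlamnu : lam = nu := by rw [← hβ2, vert nu β hβ1 hβ0]
    have hα0 : Λ.d α ≠ 0 := by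
      intro h
      have := congrFun hdα 0
      rw [h] at this
      simp only [Pi.add_apply, Pi.zero_apply, add_zero] at this
      omega
    have hsα : Λ.s α = Λ.s nu := by rw [← Λ.s_comp mu α hα1, hα2, hlamnu]
    refine ⟨α, ⟨hα0, ?_⟩, ?_, Or.inr ?_⟩
    · rw [hsα, ← hs, ← hα1]
    · rw [← hα1, hs]
    · rw [hα2, hlamnu]
  · -- equal degrees: lam = μ and lam = ν, contradiction
    have hsup : Λ.d mu ⊔ Λ.d nu = Λ.d mu := by
      funext i
      have : i = 0 := Subsingleton.elim i 0
      subst this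
      simp [heq]
    rw [hsup] at hdα hdβ
    have hα0 : Λ.d α = 0 := by
      apply fin1
      have := congrFun hdα 0
      simp only [Pi.add_apply] at this
      omega
    have hβ0 : Λ.d β = 0 := by
      apply fin1
      have := congrFun hdβ 0
      simp only [Pi.add_apply] at this
      omega
    exact absurd (by rw [← vert mu α hα1 hα0, hα2, ← hβ2, vert nu β hβ1 hβ0]) hne
  · -- d μ > d ν : α vertex, lam = μ = ν β, β cycle
    have hsup : Λ.d mu ⊔ Λ.d nu = Λ.d mu := by
      funext i
      have : i = 0 := Subsingleton.elim i 0
      subst this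
      simpa using le_of_lt hgt
    rw [hsup] at hdα hdβ
    have hα0 : Λ.d α = 0 := by
      apply fin1
      have := congrFun hdα 0
      simp only [Pi.add_apply] at this
      omega
    have hlammu : lam = mu := by rw [← hα2, vert mu α hα1 hα0]
    have hβ0 : Λ.d β ≠ 0 := by
      intro h
      have := congrFun hdβ 0
      rw [h] at this
      simp only [Pi.add_apply, Pi.zero_apply, add_zero] at this
      omega
    have hsβ : Λ.s β = Λ.s nu := by rw [← Λ.s_comp nu β hβ1, hβ2, hlammu, hs]
    refine ⟨β, ⟨hβ0, ?_⟩, ?_, Or.inl ?_⟩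
    · rw [hsβ, ← hβ1]
    · rw [← hβ1]
    · rw [hβ2, hlammu]
end

section
/- Let Λ be a finitely aligned k-graph, let (μ, ν) be a generalised cycle in Λ, and let {t_λ : λ ∈ Λ} be a Cuntz–Krieger Λ-family in a C*-algebra B. Then: (i) t_μ t_μ* ≤ t_ν t_ν*; (ii) if (μ, ν) has no entrance, then t_μ t_μ* = t_ν t_ν*; (iii) if τ ∈ s(ν)Λ is an entrance to (μ, ν), then t_ν t_ν* − t_μ t_μ* ≥ t_{ντ} t_{ντ}*. -/
open scoped ComplexOrder ENat

section Aux

namespace KGraph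

variable {k : ℕ} (Λ : KGraph k)

lemma r_s (lam : Λ.Path) : Λ.r (Λ.s lam) = Λ.s lam :=
  Λ.r_vertex _ (Λ.d_s lam)

lemma comp_cancel {mu a b : Λ.Path} (ha : Λ.s mu = Λ.r a) (hb : Λ.s mu = Λ.r b)
    (hd : Λ.d a = Λ.d b) (h : Λ.comp mu a = Λ.comp mu b) : a = b := by
  obtain ⟨p, -, hu⟩ := Λ.factor (Λ.comp mu a) (Λ.d mu) (Λ.d a) (Λ.d_comp mu a ha)
  have h1 := hu (mu, a) ⟨rfl, rfl, ha, rfl⟩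
  have h2 := hu (mu, b) ⟨rfl, hd.symm, hb, h.symm⟩
  exact congrArg Prod.snd (h1.trans h2.symm)

lemma MCE_empty_of_ne {a b : Λ.Path} (hd : Λ.d a = Λ.d b) (hne : a ≠ b) :
    Λ.MCE a b = ∅ := by
  ext lam
  simp only [Set.mem_empty_iff_false, iff_false]
  rintro ⟨hdl, ⟨x, hx1, hx2⟩, ⟨y, hy1, hy2⟩⟩
  have hda : Λ.d lam = Λ.d a := by rw [hdl, hd, sup_idem]
  have hdx : Λ.d x = 0 := by
    have h1 : Λ.d lam = Λ.d a + Λ.d x := by rw [← hx2, Λ.d_comp a x hx1]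
    funext i
    have e1 := congrFun h1 i
    have e2 := congrFun hda i
    simp only [Pi.add_apply] at e1
    simp only [Pi.zero_apply]
    omega
  have hdy : Λ.d y = 0 := by
    have h1 : Λ.d lam = Λ.d b + Λ.d y := by rw [← hy2, Λ.d_comp b y hy1]
    funext i
    have e1 := congrFun h1 i
    have e2 := congrFun hda i
    have e3 := congrFun hd i
    simp only [Pi.add_apply] at e1
    simp only [Pi.zero_apply]
    omega
  have hx : x = Λ.s a := (hx1.trans (Λ.r_vertex x hdx)).symm
  have hy : y = Λ.s b := (hy1.trans (Λ.r_vertex y hdy)).symm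
  rw [hx, Λ.comp_id] at hx2
  rw [hy, Λ.comp_id] at hy2
  exact hne (hx2.trans hy2.symm)

lemma MCEPairs_eq_empty {a b : Λ.Path} (h : Λ.MCE a b = ∅) : Λ.MCEPairs a b = ∅ := by
  ext p
  simp only [MCEPairs, Set.mem_setOf_eq, Set.mem_empty_iff_false, iff_false]
  rintro ⟨-, -, -, hm⟩
  rw [h] at hm
  exact hm

lemma MCE_comp {ν τ : Λ.Path} (h : Λ.s ν = Λ.r τ) :
    Λ.MCE ν (Λ.comp ν τ) = {Λ.comp ν τ} := by
  have hd : Λ.d (Λ.comp ν τ) = Λ.d ν + Λ.d τ := Λ.d_comp ν τ h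
  have hsup : Λ.d ν ⊔ Λ.d (Λ.comp ν τ) = Λ.d (Λ.comp ν τ) := by
    funext i
    simp only [Pi.sup_apply, hd, Pi.add_apply]
    omega
  ext lam
  constructor
  · rintro ⟨hdl, -, ⟨b, hb1, hb2⟩⟩
    have hdb : Λ.d b = 0 := by
      have h1 : Λ.d lam = Λ.d (Λ.comp ν τ) + Λ.d b := by
        rw [← hb2, Λ.d_comp _ b hb1]
      have h2 := hdl.trans hsup
      funext i
      have e1 := congrFun h1 i
      have e2 := congrFun h2 i
      simp only [Pi.add_apply] at e1
      simp only [Pi.zero_apply]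
      omega
    have hb : b = Λ.s (Λ.comp ν τ) := (hb1.trans (Λ.r_vertex b hdb)).symm
    rw [hb, Λ.comp_id] at hb2
    exact Set.mem_singleton_iff.2 hb2.symm
  · intro hl
    rw [Set.mem_singleton_iff] at hl
    subst hl
    exact ⟨hsup.symm, ⟨τ, h, rfl⟩, ⟨Λ.s (Λ.comp ν τ), (Λ.r_s _).symm, Λ.comp_id _⟩⟩

lemma MCEPairs_comp {ν τ : Λ.Path} (h : Λ.s ν = Λ.r τ) :
    Λ.MCEPairs ν (Λ.comp ν τ) = {(τ, Λ.s (Λ.comp ν τ))} := by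
  have hmce := Λ.MCE_comp h
  ext ⟨a, b⟩
  simp only [MCEPairs, Set.mem_setOf_eq, Set.mem_singleton_iff, Prod.mk.injEq]
  constructor
  · rintro ⟨h1, h2, h3, h4⟩
    rw [hmce, Set.mem_singleton_iff] at h4
    have hda : Λ.d a = Λ.d τ := by
      have e1 : Λ.d ν + Λ.d a = Λ.d ν + Λ.d τ := by
        rw [← Λ.d_comp ν a h1, ← Λ.d_comp ν τ h, h4]
      exact add_left_cancel e1
    have ha : a = τ := Λ.comp_cancel h1 h hda h4
    have h3' : Λ.comp (Λ.comp ν τ) b = Λ.comp ν τ := h3.symm.trans h4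
    have hdb : Λ.d b = 0 := by
      have e2 : Λ.d (Λ.comp ν τ) + Λ.d b = Λ.d (Λ.comp ν τ) := by
        rw [← Λ.d_comp _ b h2, h3']
      funext i
      have e3 := congrFun e2 i
      simp only [Pi.add_apply] at e3
      simp only [Pi.zero_apply]
      omega
    exact ⟨ha, (h2.trans (Λ.r_vertex b hdb)).symm⟩
  · rintro ⟨rfl, rfl⟩
    refine ⟨h, (Λ.r_s _).symm, (Λ.comp_id _).symm, ?_⟩
    rw [hmce]
    exact Set.mem_singleton _

lemma MCEPairs_self (ν : Λ.Path) : Λ.MCEPairs ν ν = {(Λ.s ν, Λ.s ν)} := by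
  have h : Λ.s ν = Λ.r (Λ.s ν) := (Λ.r_s ν).symm
  have h2 := Λ.MCEPairs_comp h
  rwa [Λ.comp_id] at h2

lemma MCEPairs_finite (hFA : Λ.FinitelyAligned) (mu nu : Λ.Path) :
    (Λ.MCEPairs mu nu).Finite := by
  apply Set.Finite.of_finite_image (f := fun p => Λ.comp mu p.1)
  · exact (hFA mu nu).subset (by rintro _ ⟨p, hp, rfl⟩; exact hp.2.2.2)
  · rintro ⟨a, b⟩ ⟨ha1, ha2, ha3, ha4⟩ ⟨a', b'⟩ ⟨hb1, hb2, hb3, hb4⟩ h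
    simp only at h
    have hda : Λ.d a = Λ.d a' := by
      have e1 : Λ.d mu + Λ.d a = Λ.d mu ⊔ Λ.d nu := by
        rw [← Λ.d_comp mu a ha1]; exact ha4.1
      have e2 : Λ.d mu + Λ.d a' = Λ.d mu ⊔ Λ.d nu := by
        rw [← Λ.d_comp mu a' hb1]; exact hb4.1
      exact add_left_cancel (e1.trans e2.symm)
    have haa : a = a' := Λ.comp_cancel ha1 hb1 hda h
    have hcc : Λ.comp nu b = Λ.comp nu b' := ha3.symm.trans (h.trans hb3)
    have hdb : Λ.d b = Λ.d b' := by
      have e1 : Λ.d nu + Λ.d b = Λ.d mu ⊔ Λ.d nu := by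
        rw [← Λ.d_comp nu b ha2, ← ha3]; exact ha4.1
      have e2 : Λ.d nu + Λ.d b' = Λ.d mu ⊔ Λ.d nu := by
        rw [← Λ.d_comp nu b' hb2, ← hb3]; exact hb4.1
      exact add_left_cancel (e1.trans e2.symm)
    have hbb : b = b' := Λ.comp_cancel ha2 hb2 hdb hcc
    exact Prod.ext haa hbb

end KGraph

namespace CKFamily

variable {k : ℕ} {Λ : KGraph k} {B : Type*} [NonUnitalRing B] [StarRing B]
  (f : CKFamily Λ B)

lemma star_t_mul_t (lam : Λ.Path) : star (f.t lam) * f.t lam = f.t (Λ.s lam) := by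
  rw [f.ck3 lam lam, Λ.MCEPairs_self lam, finsum_mem_singleton,
    f.selfadjoint _ (Λ.d_s lam), f.idem _ (Λ.d_s lam)]

lemma t_mul_s (lam : Λ.Path) : f.t lam * f.t (Λ.s lam) = f.t lam := by
  rw [f.mul_eq lam (Λ.s lam) (Λ.r_s lam).symm, Λ.comp_id]

lemma vertex_mul_t {v a : Λ.Path} (hv : Λ.IsVertex v) (h : Λ.r a = v) :
    f.t v * f.t a = f.t a := by
  have hs : Λ.s v = Λ.r a := by rw [Λ.s_vertex v hv, h]
  rw [f.mul_eq v a hs, ← h, Λ.id_comp]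

lemma star_t_mul_vertex {v a : Λ.Path} (hv : Λ.IsVertex v) (h : Λ.r a = v) :
    star (f.t a) * f.t v = star (f.t a) := by
  have h2 : star (f.t v * f.t a) = star (f.t a) := by rw [f.vertex_mul_t hv h]
  rwa [star_mul, f.selfadjoint v hv] at h2

lemma proj_star (lam : Λ.Path) :
    star (f.t lam * star (f.t lam)) = f.t lam * star (f.t lam) := by
  rw [star_mul, star_star]

lemma proj_idem (lam : Λ.Path) :
    (f.t lam * star (f.t lam)) * (f.t lam * star (f.t lam)) =
      f.t lam * star (f.t lam) := by
  rw [mul_assoc, ← mul_assoc (star (f.t lam)), f.star_t_mul_t, ← mul_assoc, f.t_mul_s]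

lemma proj_orth {a b : Λ.Path} (hd : Λ.d a = Λ.d b) (hne : a ≠ b) :
    (f.t a * star (f.t a)) * (f.t b * star (f.t b)) = 0 := by
  have h0 : star (f.t a) * f.t b = 0 := by
    rw [f.ck3 a b, Λ.MCEPairs_eq_empty (Λ.MCE_empty_of_ne hd hne), finsum_mem_empty]
  rw [mul_assoc, ← mul_assoc (star (f.t a)), h0, zero_mul, mul_zero]

lemma star_t_mul_comp {ν τ : Λ.Path} (h : Λ.s ν = Λ.r τ) :
    star (f.t ν) * f.t (Λ.comp ν τ) = f.t τ := by
  rw [f.ck3 ν (Λ.comp ν τ), Λ.MCEPairs_comp h, finsum_mem_singleton,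
    Λ.s_comp ν τ h, f.selfadjoint _ (Λ.d_s τ), f.t_mul_s]

lemma proj_absorb {ν τ : Λ.Path} (h : Λ.s ν = Λ.r τ) :
    (f.t ν * star (f.t ν)) * f.t (Λ.comp ν τ) = f.t (Λ.comp ν τ) := by
  rw [mul_assoc, f.star_t_mul_comp h, f.mul_eq ν τ h]

end CKFamily

private lemma foldl_sub {R : Type*} [NonUnitalRing R] {I : Type*} (e : R) (q : I → R) :
    ∀ (l : List I) (c : R), (∀ x ∈ l, c * (e - q x) = c - q x) →
      List.Pairwise (fun x y => q x * q y = 0) l → (∀ x ∈ l, q x * e = q x) →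
      l.foldl (fun b α => b * (e - q α)) c = c - (l.map q).sum := by
  intro l
  induction l with
  | nil => intro c _ _ _; simp
  | cons x xs ih =>
    intro c hc hp hqe
    have hxs : ∀ y ∈ xs, (c - q x) * (e - q y) = (c - q x) - q y := by
      intro y hy
      have h1 := hc y (List.mem_cons_of_mem x hy)
      have h2 := (List.pairwise_cons.1 hp).1 y hy
      have h3 := hqe x List.mem_cons_self
      rw [sub_mul, h1, mul_sub, h3, h2, sub_zero]
      abel
    simp only [List.foldl_cons]
    rw [hc x List.mem_cons_self,
      ih (c - q x) hxs (List.pairwise_cons.1 hp).2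
        (fun y hy => hqe y (List.mem_cons_of_mem x hy)),
      List.map_cons, List.sum_cons, sub_sub]

private lemma list_sum_toFinset {I M : Type*} [AddCommMonoid M] (s : Finset I)
    (g : I → M) : (s.toList.map g).sum = ∑ x ∈ s, g x := by
  rw [← Multiset.sum_coe, ← Multiset.map_coe, Finset.coe_toList,
    Finset.sum_eq_multiset_sum]

private lemma key_lemma {k : ℕ} {Λ : KGraph k} (hFA : Λ.FinitelyAligned)
    {mu nu : Λ.Path} (hgc : Λ.IsGenCycle mu nu)
    {B : Type*} [NonUnitalRing B] [StarRing B] (f : CKFamily Λ B) :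
    (f.t mu * star (f.t mu)) * (f.t nu * star (f.t nu)) =
      f.t mu * star (f.t mu) := by
  classical
  obtain ⟨hne, hss, hrr, hext⟩ := hgc
  have hv : Λ.IsVertex (Λ.s mu) := Λ.d_s mu
  have hPfin := Λ.MCEPairs_finite hFA mu nu
  set P : Finset (Λ.Path × Λ.Path) := hPfin.toFinset with hP
  set E : Finset Λ.Path := P.image Prod.fst with hEdef
  have hmemP : ∀ p ∈ P, p ∈ Λ.MCEPairs mu nu := by
    intro p hp; rwa [hP, Set.Finite.mem_toFinset] at hp
  have hE1 : ∀ x ∈ E, Λ.s mu = Λ.r x := by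
    intro x hx
    obtain ⟨p, hp, rfl⟩ := Finset.mem_image.1 hx
    exact (hmemP p hp).1
  have hE2 : ∀ x ∈ E, Λ.d mu + Λ.d x = Λ.d mu ⊔ Λ.d nu := by
    intro x hx
    obtain ⟨p, hp, rfl⟩ := Finset.mem_image.1 hx
    obtain ⟨h1, h2, h3, h4⟩ := hmemP p hp
    rw [← Λ.d_comp mu p.1 h1]
    exact h4.1
  have h0 : (Λ.MCE mu nu).Nonempty := by
    have := hext (Λ.s mu) (Λ.r_s mu)
    rwa [Λ.comp_id] at this
  obtain ⟨lam0, hlam0⟩ := h0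
  obtain ⟨hd0, ⟨a0, ha0, ha0'⟩, ⟨b0, hb0, hb0'⟩⟩ := hlam0
  have ha0E : a0 ∈ E := by
    rw [hEdef]
    apply Finset.mem_image.2
    refine ⟨(a0, b0), ?_, rfl⟩
    rw [hP, Set.Finite.mem_toFinset]
    exact ⟨ha0, hb0, ha0'.trans hb0'.symm, by
      rw [ha0']; exact ⟨hd0, ⟨a0, ha0, ha0'⟩, ⟨b0, hb0, hb0'⟩⟩⟩
  have hEne : E.Nonempty := ⟨a0, ha0E⟩
  -- exhaustivity of E in (s mu)Λ
  have hexhE : Λ.Exhaustive (Λ.s mu) (↑E : Set Λ.Path) := by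
    intro τ hτ
    obtain ⟨lam, hdlam, ⟨γ, hγ1, hγ2⟩, ⟨β, hβ1, hβ2⟩⟩ := hext τ hτ
    have hsτ : Λ.s mu = Λ.r τ := hτ.symm
    have hdμτ : Λ.d (Λ.comp mu τ) = Λ.d mu + Λ.d τ := Λ.d_comp mu τ hsτ
    have hγ1' : Λ.s τ = Λ.r γ := by rw [← Λ.s_comp mu τ hsτ]; exact hγ1
    have hσ : Λ.comp mu (Λ.comp τ γ) = lam := by
      rw [← Λ.comp_assoc mu τ γ hsτ hγ1', hγ2]
    have hdγ : Λ.d (Λ.comp τ γ) = Λ.d τ + Λ.d γ := Λ.d_comp τ γ hγ1'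
    have hrσ : Λ.s mu = Λ.r (Λ.comp τ γ) := by
      rw [Λ.r_comp τ γ hγ1']; exact hsτ
    have hdlam' : ∀ i, Λ.d lam i = max (Λ.d mu i + Λ.d τ i) (Λ.d nu i) := by
      intro i
      have h2 := congrFun hdlam i
      simpa [Pi.sup_apply, hdμτ, Pi.add_apply] using h2
    have hdla : Λ.d lam = Λ.d mu + (Λ.d τ + Λ.d γ) := by
      rw [← hσ, Λ.d_comp mu _ hrσ, hdγ]
    have hfac : Λ.d lam = (Λ.d mu ⊔ Λ.d nu) + (Λ.d lam - (Λ.d mu ⊔ Λ.d nu)) := by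
      funext i
      have h2 := hdlam' i
      simp only [Pi.add_apply, Pi.sub_apply, Pi.sup_apply]
      omega
    obtain ⟨⟨l1, l2⟩, ⟨hdl1, hdl2, hsl, hcl⟩, -⟩ :=
      Λ.factor lam (Λ.d mu ⊔ Λ.d nu) (Λ.d lam - (Λ.d mu ⊔ Λ.d nu)) hfac
    have hfacl1 : Λ.d l1 = Λ.d mu + ((Λ.d mu ⊔ Λ.d nu) - Λ.d mu) := by
      funext i
      have h2 := congrFun hdl1 i
      simp only [Pi.add_apply, Pi.sub_apply, Pi.sup_apply] at h2 ⊢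
      omega
    obtain ⟨⟨m1, α⟩, ⟨hdm1, hdα, hsα, hcα⟩, -⟩ :=
      Λ.factor l1 (Λ.d mu) ((Λ.d mu ⊔ Λ.d nu) - Λ.d mu) hfacl1
    have hsα2 : Λ.s α = Λ.r l2 := by
      rw [← Λ.s_comp m1 α hsα, hcα]; exact hsl
    have hfacμ : Λ.d lam = Λ.d mu + (Λ.d lam - Λ.d mu) := by
      funext i
      have h2 := hdlam' i
      simp only [Pi.add_apply, Pi.sub_apply]
      omega
    obtain ⟨pμ, -, hupμ⟩ := Λ.factor lam (Λ.d mu) (Λ.d lam - Λ.d mu) hfacμ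
    have hdσeq : Λ.d (Λ.comp τ γ) = Λ.d lam - Λ.d mu := by
      funext i
      have h1 := congrFun hdla i
      have h2 := congrFun hdγ i
      simp only [Pi.add_apply, Pi.sub_apply] at h1 h2 ⊢
      omega
    have hdαl2 : Λ.d (Λ.comp α l2) = Λ.d lam - Λ.d mu := by
      rw [Λ.d_comp α l2 hsα2, hdα, hdl2]
      funext i
      have h2 := hdlam' i
      simp only [Pi.add_apply, Pi.sub_apply, Pi.sup_apply]
      omega
    have hcomp2 : Λ.comp m1 (Λ.comp α l2) = lam := by
      rw [← Λ.comp_assoc m1 α l2 hsα hsα2, hcα, hcl]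
    have hu1 := hupμ (mu, Λ.comp τ γ) ⟨rfl, hdσeq, hrσ, hσ⟩
    have hu2 := hupμ (m1, Λ.comp α l2)
      ⟨hdm1, hdαl2, by rw [Λ.r_comp α l2 hsα2]; exact hsα, hcomp2⟩
    have hm1 : m1 = mu := congrArg Prod.fst (hu2.trans hu1.symm)
    have hσeq : Λ.comp α l2 = Λ.comp τ γ := congrArg Prod.snd (hu2.trans hu1.symm)
    have hfacl1ν : Λ.d l1 = Λ.d nu + ((Λ.d mu ⊔ Λ.d nu) - Λ.d nu) := by
      funext i
      have h2 := congrFun hdl1 i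
      simp only [Pi.add_apply, Pi.sub_apply, Pi.sup_apply] at h2 ⊢
      omega
    obtain ⟨⟨n1, β1⟩, ⟨hdn1, hdβ1, hsβ1, hcβ1⟩, -⟩ :=
      Λ.factor l1 (Λ.d nu) ((Λ.d mu ⊔ Λ.d nu) - Λ.d nu) hfacl1ν
    have hsβ2 : Λ.s β1 = Λ.r l2 := by
      rw [← Λ.s_comp n1 β1 hsβ1, hcβ1]; exact hsl
    have hfacν : Λ.d lam = Λ.d nu + (Λ.d lam - Λ.d nu) := by
      funext i
      have h2 := hdlam' i
      simp only [Pi.add_apply, Pi.sub_apply]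
      omega
    obtain ⟨pν, -, hupν⟩ := Λ.factor lam (Λ.d nu) (Λ.d lam - Λ.d nu) hfacν
    have hdβ : Λ.d β = Λ.d lam - Λ.d nu := by
      have h1 : Λ.d lam = Λ.d nu + Λ.d β := by rw [← hβ2, Λ.d_comp nu β hβ1]
      funext i
      have e1 := congrFun h1 i
      simp only [Pi.add_apply] at e1
      simp only [Pi.sub_apply]
      omega
    have hdβl2 : Λ.d (Λ.comp β1 l2) = Λ.d lam - Λ.d nu := by
      rw [Λ.d_comp β1 l2 hsβ2, hdβ1, hdl2]
      funext i
      have h2 := hdlam' i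
      simp only [Pi.add_apply, Pi.sub_apply, Pi.sup_apply]
      omega
    have hcompν2 : Λ.comp n1 (Λ.comp β1 l2) = lam := by
      rw [← Λ.comp_assoc n1 β1 l2 hsβ1 hsβ2, hcβ1, hcl]
    have hv1 := hupν (nu, β) ⟨rfl, hdβ, hβ1, hβ2⟩
    have hv2 := hupν (n1, Λ.comp β1 l2)
      ⟨hdn1, hdβl2, by rw [Λ.r_comp β1 l2 hsβ2]; exact hsβ1, hcompν2⟩
    have hn1 : n1 = nu := congrArg Prod.fst (hv2.trans hv1.symm)
    have hl1mem : l1 ∈ Λ.MCE mu nu :=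
      ⟨hdl1, ⟨α, by rw [← hm1]; exact hsα, by rw [← hm1]; exact hcα⟩,
        ⟨β1, by rw [← hn1]; exact hsβ1, by rw [← hn1]; exact hcβ1⟩⟩
    have hαE : α ∈ E := by
      rw [hEdef]
      apply Finset.mem_image.2
      refine ⟨(α, β1), ?_, rfl⟩
      rw [hP, Set.Finite.mem_toFinset]
      refine ⟨by rw [← hm1]; exact hsα, by rw [← hn1]; exact hsβ1, ?_, ?_⟩
      · have e1 : Λ.comp mu α = l1 := by rw [← hm1]; exact hcα
        have e2 : Λ.comp nu β1 = l1 := by rw [← hn1]; exact hcβ1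
        exact e1.trans e2.symm
      · have e1 : Λ.comp mu α = l1 := by rw [← hm1]; exact hcα
        rw [e1]; exact hl1mem
    have hdστα : Λ.d (Λ.comp τ γ) = Λ.d τ ⊔ Λ.d α := by
      funext i
      have h1 := congrFun hdla i
      have h2 := hdlam' i
      have h3 := congrFun hdα i
      have h4 := congrFun hdγ i
      simp only [Pi.add_apply, Pi.sub_apply, Pi.sup_apply] at h1 h3 h4 ⊢
      omega
    exact ⟨α, hαE, ⟨Λ.comp τ γ, hdστα, ⟨γ, hγ1', rfl⟩, ⟨l2, hsα2, hσeq⟩⟩⟩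
  -- apply (CK4)
  have hLne : E.toList ≠ [] := by
    rw [ne_eq, Finset.toList_eq_nil]
    exact Finset.nonempty_iff_ne_empty.1 hEne
  obtain ⟨a, l, hal⟩ := List.exists_cons_of_ne_nil hLne
  have hmemal : ∀ x, x ∈ a :: l ↔ x ∈ E := by
    intro x; rw [← hal]; exact Finset.mem_toList
  have hnd : (a :: l).Nodup := hal ▸ E.nodup_toList
  have hexh' : Λ.Exhaustive (Λ.s mu) {lam | lam ∈ a :: l} := by
    have hseq : {lam | lam ∈ a :: l} = (↑E : Set Λ.Path) := by
      ext x
      simp only [Set.mem_setOf_eq, Finset.mem_coe]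
      exact hmemal x
    rw [hseq]; exact hexhE
  have hck4 := f.ck4 (Λ.s mu) hv a l hnd
    (fun x hx => (hE1 x ((hmemal x).1 hx)).symm) hexh'
  rw [List.foldl_map] at hck4
  have habs : ∀ x ∈ a :: l,
      f.t (Λ.s mu) * (f.t x * star (f.t x)) = f.t x * star (f.t x) := by
    intro x hx
    rw [← mul_assoc, f.vertex_mul_t hv (hE1 x ((hmemal x).1 hx)).symm]
  have hqe : ∀ x ∈ a :: l,
      (f.t x * star (f.t x)) * f.t (Λ.s mu) = f.t x * star (f.t x) := by
    intro x hx
    rw [mul_assoc, f.star_t_mul_vertex hv (hE1 x ((hmemal x).1 hx)).symm]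
  have hc : ∀ x ∈ a :: l,
      f.t (Λ.s mu) * (f.t (Λ.s mu) - f.t x * star (f.t x)) =
        f.t (Λ.s mu) - f.t x * star (f.t x) := by
    intro x hx
    rw [mul_sub, f.idem _ hv, habs x hx]
  have hpair : List.Pairwise
      (fun x y => (f.t x * star (f.t x)) * (f.t y * star (f.t y)) = 0) (a :: l) := by
    refine List.Pairwise.imp_of_mem ?_ hnd
    intro x y hx hy hxy
    have hdx := hE2 x ((hmemal x).1 hx)
    have hdy := hE2 y ((hmemal y).1 hy)
    exact f.proj_orth (add_left_cancel (hdx.trans hdy.symm)) hxy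
  have hfold := foldl_sub (f.t (Λ.s mu)) (fun x => f.t x * star (f.t x)) (a :: l)
    (f.t (Λ.s mu)) hc hpair hqe
  simp only [List.foldl_cons] at hfold
  rw [hc a List.mem_cons_self] at hfold
  have hsum0 : f.t (Λ.s mu) -
      ((a :: l).map fun x => f.t x * star (f.t x)).sum = 0 := by
    rw [← hfold]; exact hck4
  have hes : f.t (Λ.s mu) = ∑ x ∈ E, f.t x * star (f.t x) := by
    have h1 := sub_eq_zero.1 hsum0
    rw [← hal, list_sum_toFinset] at h1
    exact h1
  have hinj : ∀ p ∈ P, ∀ p' ∈ P, p.1 = p'.1 → p = p' := by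
    intro p hp p' hp' h
    obtain ⟨h1, h2, h3, h4⟩ := hmemP p hp
    obtain ⟨g1, g2, g3, g4⟩ := hmemP p' hp'
    have hcc : Λ.comp nu p.2 = Λ.comp nu p'.2 := by
      rw [← h3, ← g3, h]
    have hdb : Λ.d p.2 = Λ.d p'.2 := by
      have e1 : Λ.d nu + Λ.d p.2 = Λ.d mu ⊔ Λ.d nu := by
        rw [← Λ.d_comp nu p.2 h2, ← h3]; exact h4.1
      have e2 : Λ.d nu + Λ.d p'.2 = Λ.d mu ⊔ Λ.d nu := by
        rw [← Λ.d_comp nu p'.2 g2, ← g3]; exact g4.1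
      exact add_left_cancel (e1.trans e2.symm)
    exact Prod.ext h (Λ.comp_cancel h2 g2 hdb hcc)
  have hp' : f.t mu * star (f.t mu) =
      ∑ p ∈ P, f.t (Λ.comp mu p.1) * star (f.t (Λ.comp mu p.1)) := by
    have h1 : f.t mu * star (f.t mu) = f.t mu * f.t (Λ.s mu) * star (f.t mu) := by
      rw [f.t_mul_s]
    rw [h1, hes, Finset.mul_sum, Finset.sum_mul, hEdef, Finset.sum_image hinj]
    refine Finset.sum_congr rfl fun p hp => ?_
    have hsx := (hmemP p hp).1
    rw [← mul_assoc, f.mul_eq mu p.1 hsx, mul_assoc, ← star_mul, f.mul_eq mu p.1 hsx]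
  have hpq : (f.t mu * star (f.t mu)) * (f.t nu * star (f.t nu)) =
      ∑ p ∈ P, f.t (Λ.comp mu p.1) * star (f.t (Λ.comp mu p.1)) := by
    have h2 : (f.t mu * star (f.t mu)) * (f.t nu * star (f.t nu)) =
        f.t mu * (star (f.t mu) * f.t nu) * star (f.t nu) := by
      simp only [mul_assoc]
    rw [h2, f.ck3 mu nu, ← Set.Finite.coe_toFinset hPfin, finsum_mem_coe_finset,
      ← hP, Finset.mul_sum, Finset.sum_mul]
    refine Finset.sum_congr rfl fun p hp => ?_
    obtain ⟨h1', h2', h3', -⟩ := hmemP p hp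
    rw [← mul_assoc, f.mul_eq mu p.1 h1', mul_assoc, ← star_mul,
      f.mul_eq nu p.2 h2', ← h3']
  rw [hpq]
  exact hp'.symm

end Aux


/-- Lemma 3.7. For a generalised cycle `(μ, ν)` and any Cuntz–Krieger
family: (i) `t_μ t_μ* ≤ t_ν t_ν*`; (ii) if `(μ, ν)` has no entrance then equality holds;
(iii) if `τ` is an entrance then `t_ν t_ν* − t_μ t_μ* ≥ t_{ντ} t_{ντ}*`. -/
theorem stmt10 {k : ℕ} (Λ : KGraph k) (hFA : Λ.FinitelyAligned)
    (mu nu : Λ.Path) (hgc : Λ.IsGenCycle mu nu)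
    (B : Type*) [NonUnitalCStarAlgebra B] [PartialOrder B] [StarOrderedRing B]
    (f : CKFamily Λ B) :
    f.t mu * star (f.t mu) ≤ f.t nu * star (f.t nu) ∧
    ((¬ ∃ τ, Λ.IsEntrance mu nu τ) →
      f.t mu * star (f.t mu) = f.t nu * star (f.t nu)) ∧
    ∀ τ, Λ.IsEntrance mu nu τ →
      f.t (Λ.comp nu τ) * star (f.t (Λ.comp nu τ)) ≤
        f.t nu * star (f.t nu) - f.t mu * star (f.t mu) := by
  classical
  have hkey1 := key_lemma hFA hgc f
  have hqp : (f.t nu * star (f.t nu)) * (f.t mu * star (f.t mu)) =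
      f.t mu * star (f.t mu) := by
    have h := congrArg star hkey1
    rwa [star_mul, f.proj_star nu, f.proj_star mu] at h
  have hA : (f.t nu * star (f.t nu) - f.t mu * star (f.t mu)) *
      (f.t nu * star (f.t nu) - f.t mu * star (f.t mu)) =
      f.t nu * star (f.t nu) - f.t mu * star (f.t mu) := by
    rw [sub_mul, mul_sub, mul_sub, f.proj_idem nu, f.proj_idem mu, hqp, hkey1]
    abel
  have hstarA : star (f.t nu * star (f.t nu) - f.t mu * star (f.t mu)) =
      f.t nu * star (f.t nu) - f.t mu * star (f.t mu) := by
    rw [star_sub, f.proj_star, f.proj_star]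
  have hpos : (0 : B) ≤ f.t nu * star (f.t nu) - f.t mu * star (f.t mu) := by
    have h := star_mul_self_nonneg
      (f.t nu * star (f.t nu) - f.t mu * star (f.t mu))
    rwa [hstarA, hA] at h
  refine ⟨sub_nonneg.1 hpos, ?_, ?_⟩
  · intro hno
    have hgc' : Λ.IsGenCycle nu mu := by
      refine ⟨Ne.symm hgc.1, hgc.2.1.symm, hgc.2.2.1.symm, ?_⟩
      intro τ hτ
      rw [Set.nonempty_iff_ne_empty]
      intro hemp
      exact hno ⟨τ, hτ, hemp⟩
    have hkey2 := key_lemma hFA hgc' f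
    exact hqp.symm.trans hkey2
  · rintro τ ⟨hrτ, hMCE⟩
    have hsντ : Λ.s nu = Λ.r τ := hrτ.symm
    have hqe : (f.t nu * star (f.t nu)) *
        (f.t (Λ.comp nu τ) * star (f.t (Λ.comp nu τ))) =
        f.t (Λ.comp nu τ) * star (f.t (Λ.comp nu τ)) := by
      rw [← mul_assoc, f.proj_absorb hsντ]
    have heq : (f.t (Λ.comp nu τ) * star (f.t (Λ.comp nu τ))) *
        (f.t nu * star (f.t nu)) =
        f.t (Λ.comp nu τ) * star (f.t (Λ.comp nu τ)) := by
      have h := congrArg star hqe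
      rwa [star_mul, f.proj_star nu, f.proj_star (Λ.comp nu τ)] at h
    have hep : (f.t (Λ.comp nu τ) * star (f.t (Λ.comp nu τ))) *
        (f.t mu * star (f.t mu)) = 0 := by
      have h0 : star (f.t (Λ.comp nu τ)) * f.t mu = 0 := by
        rw [f.ck3 (Λ.comp nu τ) mu, Λ.MCEPairs_eq_empty hMCE, finsum_mem_empty]
      rw [mul_assoc, ← mul_assoc (star (f.t (Λ.comp nu τ))), h0, zero_mul, mul_zero]
    have hpe : (f.t mu * star (f.t mu)) *
        (f.t (Λ.comp nu τ) * star (f.t (Λ.comp nu τ))) = 0 := by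
      have h := congrArg star hep
      rwa [star_mul, f.proj_star mu, f.proj_star (Λ.comp nu τ), star_zero] at h
    have hr1e : (f.t nu * star (f.t nu) - f.t mu * star (f.t mu)) *
        (f.t (Λ.comp nu τ) * star (f.t (Λ.comp nu τ))) =
        f.t (Λ.comp nu τ) * star (f.t (Λ.comp nu τ)) := by
      rw [sub_mul, hqe, hpe, sub_zero]
    have her1 : (f.t (Λ.comp nu τ) * star (f.t (Λ.comp nu τ))) *
        (f.t nu * star (f.t nu) - f.t mu * star (f.t mu)) =
        f.t (Λ.comp nu τ) * star (f.t (Λ.comp nu τ)) := by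
      rw [mul_sub, heq, hep, sub_zero]
    have hB : ((f.t nu * star (f.t nu) - f.t mu * star (f.t mu)) -
        f.t (Λ.comp nu τ) * star (f.t (Λ.comp nu τ))) *
        ((f.t nu * star (f.t nu) - f.t mu * star (f.t mu)) -
        f.t (Λ.comp nu τ) * star (f.t (Λ.comp nu τ))) =
        (f.t nu * star (f.t nu) - f.t mu * star (f.t mu)) -
        f.t (Λ.comp nu τ) * star (f.t (Λ.comp nu τ)) := by
      rw [sub_mul,
        mul_sub (f.t nu * star (f.t nu) - f.t mu * star (f.t mu))
          (f.t nu * star (f.t nu) - f.t mu * star (f.t mu))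
          (f.t (Λ.comp nu τ) * star (f.t (Λ.comp nu τ))),
        hA, hr1e,
        mul_sub (f.t (Λ.comp nu τ) * star (f.t (Λ.comp nu τ)))
          (f.t nu * star (f.t nu) - f.t mu * star (f.t mu))
          (f.t (Λ.comp nu τ) * star (f.t (Λ.comp nu τ))),
        her1, f.proj_idem (Λ.comp nu τ)]
      abel
    have hstarB : star ((f.t nu * star (f.t nu) - f.t mu * star (f.t mu)) -
        f.t (Λ.comp nu τ) * star (f.t (Λ.comp nu τ))) =
        (f.t nu * star (f.t nu) - f.t mu * star (f.t mu)) -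
        f.t (Λ.comp nu τ) * star (f.t (Λ.comp nu τ)) := by
      rw [star_sub, hstarA, f.proj_star]
    have hposB := star_mul_self_nonneg
      ((f.t nu * star (f.t nu) - f.t mu * star (f.t mu)) -
        f.t (Λ.comp nu τ) * star (f.t (Λ.comp nu τ)))
    rw [hstarB, hB] at hposB
    exact sub_nonneg.1 hposB
end

section
/- Let Λ be a row-finite k-graph, and suppose that ρ ∈ Λ is a cycle with no entrance; set v := r(ρ) = s(ρ). For each m ∈ ℕ^k such that m ∧ d(ρ) = 0 (coordinatewise minimum), the map P_ρ : vΛ^m → vΛ^m defined by P_ρ(μ) := (ρμ)(0, m) is a bijection. -/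
open scoped ComplexOrder ENat

/-- Lemma 5.5. If `ρ` is a cycle with no entrance in a row-finite
`k`-graph and `m ∧ d(ρ) = 0`, then the map `P_ρ : vΛ^m → vΛ^m`, `P_ρ(μ) = (ρμ)(0, m)`
(characterised by `ρμ = P_ρ(μ)·rest` with `d (P_ρ μ) = m`), is a bijection of `vΛ^m`. -/
theorem stmt12 {k : ℕ} (Λ : KGraph k) (hRF : Λ.RowFinite)
    (ρ : Λ.Path) (hcyc : Λ.IsCycle ρ)
    (hnoent : ∀ τ, Λ.r τ = Λ.r ρ → (Λ.MCE τ ρ).Nonempty)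
    (m : Fin k → ℕ) (hm : m ⊓ Λ.d ρ = 0)
    (P : Λ.Path → Λ.Path)
    (hP : ∀ mu, Λ.r mu = Λ.r ρ → Λ.d mu = m →
      Λ.d (P mu) = m ∧ ∃ rest, Λ.s (P mu) = Λ.r rest ∧
        Λ.comp (P mu) rest = Λ.comp ρ mu) :
    Set.BijOn P {mu : Λ.Path | Λ.r mu = Λ.r ρ ∧ Λ.d mu = m}
      {mu : Λ.Path | Λ.r mu = Λ.r ρ ∧ Λ.d mu = m} := by
  set S := {mu : Λ.Path | Λ.r mu = Λ.r ρ ∧ Λ.d mu = m} with hS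
  have hv : Λ.IsVertex (Λ.r ρ) := Λ.d_r ρ
  have hfin : S.Finite := hRF (Λ.r ρ) m hv
  have hsr : Λ.s ρ = Λ.r ρ := (hcyc.2).symm
  have hsup : Λ.d ρ ⊔ m = m + Λ.d ρ := by
    funext i
    have := congrFun hm i
    simp only [Pi.sup_apply, Pi.add_apply, Pi.inf_apply, Pi.zero_apply] at this ⊢
    omega
  have hmaps : Set.MapsTo P S S := by
    rintro mu ⟨h1, h2⟩
    obtain ⟨hd, rest, hsr2, hcomp⟩ := hP mu h1 h2
    refine ⟨?_, hd⟩
    have h3 := Λ.r_comp _ _ hsr2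
    rw [hcomp] at h3
    rw [← h3, Λ.r_comp ρ mu (hsr.trans h1.symm)]
  have hsurj : Set.SurjOn P S S := by
    rintro mu ⟨h1, h2⟩
    obtain ⟨lam, hdlam, ⟨α, hα1, hα2⟩, β, hβ1, hβ2⟩ := hnoent mu h1
    rw [h2, sup_comm] at hdlam
    have hdβ : Λ.d β = m := by
      have h3 : Λ.d lam = Λ.d ρ + Λ.d β := by rw [← hβ2, Λ.d_comp _ _ hβ1]
      funext i
      have h4 := congrFun (h3.symm.trans (hdlam.trans hsup)) i
      simp only [Pi.add_apply] at h4
      omega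
    have hdα : Λ.d α = Λ.d ρ := by
      have h3 : Λ.d lam = Λ.d mu + Λ.d α := by rw [← hα2, Λ.d_comp _ _ hα1]
      funext i
      have h4 := congrFun (h3.symm.trans (hdlam.trans hsup)) i
      simp only [Pi.add_apply, h2] at h4
      omega
    have hrβ : Λ.r β = Λ.r ρ := hβ1.symm.trans hsr
    refine ⟨β, ⟨hrβ, hdβ⟩, ?_⟩
    obtain ⟨hdP, rest, hsrest, hcompP⟩ := hP β hrβ hdβ
    have hcompP' : Λ.comp (P β) rest = lam := hcompP.trans hβ2
    have hdrest : Λ.d rest = Λ.d ρ := by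
      have h3 : Λ.d lam = Λ.d (P β) + Λ.d rest := by
        rw [← hcompP', Λ.d_comp _ _ hsrest]
      funext i
      have h4 := congrFun (h3.symm.trans (hdlam.trans hsup)) i
      simp only [Pi.add_apply, hdP] at h4
      omega
    obtain ⟨p, -, hpuniq⟩ := Λ.factor lam m (Λ.d ρ) (hdlam.trans hsup)
    have e1 := hpuniq (mu, α) ⟨h2, hdα, hα1, hα2⟩
    have e2 := hpuniq (P β, rest) ⟨hdP, hdrest, hsrest, hcompP'⟩
    have := e2.trans e1.symm
    exact (congrArg Prod.fst this)
  exact (hfin.surjOn_iff_bijOn_of_mapsTo hmaps).mp hsurj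
end

section
/- Let Λ be a row-finite k-graph, and suppose that ρ ∈ Λ is a cycle with no entrance. For each μ ∈ r(ρ)Λ such that d(μ) ∧ d(ρ) = 0 (coordinatewise minimum) and for each n ∈ ℕ, the set s(μ)Λ^{n·d(ρ)} has exactly one element. Moreover, there exists p ∈ ℕ with p ≥ 1 such that the unique element of s(μ)Λ^{p·d(ρ)} is a cycle. -/
open scoped ComplexOrder ENat

namespace KGraph

variable {k : ℕ}

/-- Choice of a factorisation of `lam` into degrees `(m, n)`. -/
noncomputable def fpair (Λ : KGraph k) (lam : Λ.Path) (m n : Fin k → ℕ) :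
    Λ.Path × Λ.Path :=
  if h : Λ.d lam = m + n then (Λ.factor lam m n h).choose else (lam, lam)

lemma fpair_spec (Λ : KGraph k) {lam : Λ.Path} {m n : Fin k → ℕ}
    (h : Λ.d lam = m + n) :
    Λ.d (Λ.fpair lam m n).1 = m ∧ Λ.d (Λ.fpair lam m n).2 = n ∧
    Λ.s (Λ.fpair lam m n).1 = Λ.r (Λ.fpair lam m n).2 ∧
    Λ.comp (Λ.fpair lam m n).1 (Λ.fpair lam m n).2 = lam := by
  rw [fpair, dif_pos h]
  exact (Λ.factor lam m n h).choose_spec.1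

lemma fpair_eq (Λ : KGraph k) {lam : Λ.Path} {m n : Fin k → ℕ}
    (h : Λ.d lam = m + n) {a b : Λ.Path}
    (ha : Λ.d a = m) (hb : Λ.d b = n) (hab : Λ.s a = Λ.r b)
    (hc : Λ.comp a b = lam) : Λ.fpair lam m n = (a, b) := by
  rw [fpair, dif_pos h]
  exact ((Λ.factor lam m n h).choose_spec.2 (a, b) ⟨ha, hb, hab, hc⟩).symm

lemma cancel_left (Λ : KGraph k) {mu a b : Λ.Path}
    (ha : Λ.s mu = Λ.r a) (hb : Λ.s mu = Λ.r b) (hd : Λ.d a = Λ.d b)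
    (h : Λ.comp mu a = Λ.comp mu b) : a = b := by
  obtain ⟨p, _, hu⟩ := Λ.factor (Λ.comp mu a) (Λ.d mu) (Λ.d a) (Λ.d_comp mu a ha)
  have h1 := hu (mu, a) ⟨rfl, rfl, ha, rfl⟩
  have h2 := hu (mu, b) ⟨rfl, hd.symm, hb, h.symm⟩
  exact congrArg Prod.snd (h1.trans h2.symm)

section

variable (Λ : KGraph k) (ρ : Λ.Path)

/-- Powers of a cycle. -/
noncomputable def cpow : ℕ → Λ.Path
  | 0 => Λ.r ρ
  | n + 1 => Λ.comp ρ (cpow n)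

variable (hs : Λ.r ρ = Λ.s ρ)
include hs

lemma cpow_r (n : ℕ) : Λ.r (Λ.cpow ρ n) = Λ.r ρ := by
  induction n with
  | zero => exact Λ.r_vertex _ (Λ.d_r ρ)
  | succ n ih => exact Λ.r_comp ρ _ (by rw [← hs, ih])

lemma cpow_s (n : ℕ) : Λ.s (Λ.cpow ρ n) = Λ.r ρ := by
  induction n with
  | zero => exact Λ.s_vertex _ (Λ.d_r ρ)
  | succ n ih =>
      rw [show Λ.cpow ρ (n+1) = Λ.comp ρ (Λ.cpow ρ n) from rfl,
        Λ.s_comp ρ _ (by rw [← hs, cpow_r Λ ρ hs n]), ih]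

lemma cpow_d (n : ℕ) : Λ.d (Λ.cpow ρ n) = n • Λ.d ρ := by
  induction n with
  | zero => rw [show Λ.cpow ρ 0 = Λ.r ρ from rfl, Λ.d_r, zero_smul]
  | succ n ih =>
      rw [show Λ.cpow ρ (n+1) = Λ.comp ρ (Λ.cpow ρ n) from rfl,
        Λ.d_comp ρ _ (by rw [← hs, cpow_r Λ ρ hs n]), ih, succ_nsmul']


lemma cpow_succ' (n : ℕ) : Λ.cpow ρ (n + 1) = Λ.comp (Λ.cpow ρ n) ρ := by
  induction n with
  | zero => show Λ.comp ρ (Λ.r ρ) = Λ.comp (Λ.r ρ) ρ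
            rw [Λ.id_comp ρ, hs, Λ.comp_id]
  | succ n ih =>
      show Λ.comp ρ (Λ.cpow ρ (n + 1)) = Λ.comp (Λ.cpow ρ (n + 1)) ρ
      rw [ih, ← Λ.comp_assoc ρ _ ρ (by rw [← hs, cpow_r Λ ρ hs n]) (by rw [cpow_s Λ ρ hs n, hs]),
        show Λ.comp ρ (Λ.cpow ρ n) = Λ.cpow ρ (n + 1) from rfl, ih]

/-- Every path at `r ρ` of degree `n • d ρ` is the `n`-th power of `ρ`. -/
lemma cpow_unique (hnoent : ∀ τ, Λ.r τ = Λ.r ρ → (Λ.MCE τ ρ).Nonempty) :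
    ∀ (n : ℕ) (η : Λ.Path), Λ.r η = Λ.r ρ → Λ.d η = n • Λ.d ρ → η = Λ.cpow ρ n := by
  intro n
  induction n with
  | zero =>
      intro η hr hd
      rw [zero_smul] at hd
      rw [cpow, ← hr, Λ.r_vertex η hd]
  | succ n ih =>
      intro η hr hd
      obtain ⟨χ, hχd, ⟨a, haη, haχ⟩, ⟨b, hbρ, hbχ⟩⟩ := hnoent η hr
      have hle : Λ.d ρ ≤ Λ.d η := by
        intro i
        rw [hd]
        simp only [Pi.smul_apply, smul_eq_mul]
        exact Nat.le_mul_of_pos_left _ n.succ_pos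
      have hχη : Λ.d χ = Λ.d η := by rw [hχd, sup_eq_left.mpr hle]
      have hda : Λ.d a = 0 := by
        have h1 : Λ.d η + Λ.d a = Λ.d η := by
          rw [← Λ.d_comp η a haη, haχ, hχη]
        funext i
        have := congrFun h1 i
        simp only [Pi.add_apply, Pi.zero_apply] at this ⊢
        omega
      have haeq : a = Λ.s η := by rw [haη, Λ.r_vertex a hda]
      have hχeq : χ = η := by rw [← haχ, haeq, Λ.comp_id]
      have hdb : Λ.d b = n • Λ.d ρ := by
        have h1 : Λ.d ρ + Λ.d b = (n + 1) • Λ.d ρ := by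
          rw [← Λ.d_comp ρ b hbρ, hbχ, hχη, hd]
        rw [succ_nsmul'] at h1
        exact add_left_cancel h1
      have hrb : Λ.r b = Λ.r ρ := by rw [← hbρ, ← hs]
      rw [← hχeq, ← hbχ, ih b hrb hdb]
      rfl

end

section Sigma

variable (Λ : KGraph k) (ρ mu : Λ.Path)

/-- The "rotation" map: `σ ζ` is the initial segment of degree `d μ` of `ρ ζ`. -/
noncomputable def sig : Λ.Path → Λ.Path :=
  fun ζ => (Λ.fpair (Λ.comp ρ ζ) (Λ.d mu) (Λ.d ρ)).1

variable (hs : Λ.r ρ = Λ.s ρ)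
include hs

lemma d_comp_rho {ζ : Λ.Path} (hζr : Λ.r ζ = Λ.r ρ) (hζd : Λ.d ζ = Λ.d mu) :
    Λ.d (Λ.comp ρ ζ) = Λ.d mu + Λ.d ρ := by
  rw [Λ.d_comp ρ ζ (by rw [hζr, hs]), hζd, add_comm]

lemma sig_spec {ζ : Λ.Path} (hζr : Λ.r ζ = Λ.r ρ) (hζd : Λ.d ζ = Λ.d mu) :
    Λ.d (Λ.sig ρ mu ζ) = Λ.d mu ∧
    Λ.d (Λ.fpair (Λ.comp ρ ζ) (Λ.d mu) (Λ.d ρ)).2 = Λ.d ρ ∧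
    Λ.s (Λ.sig ρ mu ζ) = Λ.r (Λ.fpair (Λ.comp ρ ζ) (Λ.d mu) (Λ.d ρ)).2 ∧
    Λ.comp (Λ.sig ρ mu ζ) (Λ.fpair (Λ.comp ρ ζ) (Λ.d mu) (Λ.d ρ)).2 = Λ.comp ρ ζ :=
  Λ.fpair_spec (Λ.d_comp_rho ρ mu hs hζr hζd)

lemma sig_r {ζ : Λ.Path} (hζr : Λ.r ζ = Λ.r ρ) (hζd : Λ.d ζ = Λ.d mu) :
    Λ.r (Λ.sig ρ mu ζ) = Λ.r ρ := by
  obtain ⟨h1, h2, h3, h4⟩ := Λ.sig_spec ρ mu hs hζr hζd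
  rw [← Λ.r_comp _ _ h3, h4, Λ.r_comp ρ ζ (by rw [hζr, hs])]

end Sigma

end KGraph

/-- Lemma 5.6. If `ρ` is a cycle with no entrance in a row-finite
`k`-graph and `μ ∈ r(ρ)Λ` has `d(μ) ∧ d(ρ) = 0`, then for every `n ∈ ℕ` the set
`s(μ)Λ^{n·d(ρ)}` is a singleton, and for some `p ≥ 1` its unique element is a cycle. -/
theorem stmt13 {k : ℕ} (Λ : KGraph k) (hRF : Λ.RowFinite)
    (ρ : Λ.Path) (hcyc : Λ.IsCycle ρ)
    (hnoent : ∀ τ, Λ.r τ = Λ.r ρ → (Λ.MCE τ ρ).Nonempty)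
    (mu : Λ.Path) (hmu : Λ.r mu = Λ.r ρ) (hm : Λ.d mu ⊓ Λ.d ρ = 0) :
    (∀ n : ℕ, ∃! lam : Λ.Path, Λ.r lam = Λ.s mu ∧ Λ.d lam = n • Λ.d ρ) ∧
    ∃ p : ℕ, 1 ≤ p ∧ ∀ lam : Λ.Path,
      Λ.r lam = Λ.s mu → Λ.d lam = p • Λ.d ρ → Λ.IsCycle lam := by
  classical
  have hs : Λ.r ρ = Λ.s ρ := hcyc.2
  set σ : Λ.Path → Λ.Path := Λ.sig ρ mu with hσdef
  set F : Set Λ.Path := {lam | Λ.r lam = Λ.r ρ ∧ Λ.d lam = Λ.d mu} with hFdef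
  have hmuF : mu ∈ F := ⟨hmu, rfl⟩
  have hFfin : F.Finite := hRF (Λ.r ρ) (Λ.d mu) (Λ.d_r ρ)
  haveI : Finite ↥F := hFfin.to_subtype
  have hsup : Λ.d mu ⊔ Λ.d ρ = Λ.d mu + Λ.d ρ := by
    funext i
    have := congrFun hm i
    simp only [Pi.inf_apply, Pi.zero_apply] at this
    simp only [Pi.sup_apply, Pi.add_apply]
    omega
  -- σ maps F into F
  have hσF : ∀ ζ ∈ F, σ ζ ∈ F := fun ζ hζ =>
    ⟨Λ.sig_r ρ mu hs hζ.1 hζ.2, (Λ.sig_spec ρ mu hs hζ.1 hζ.2).1⟩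
  -- σ is surjective on F
  have hσsurj : ∀ η ∈ F, ∃ ζ ∈ F, σ ζ = η := by
    intro η hη
    obtain ⟨χ, hχd, ⟨a, haη, haχ⟩, ⟨b, hbρ, hbχ⟩⟩ := hnoent η hη.1
    have hχd' : Λ.d χ = Λ.d mu + Λ.d ρ := by rw [hχd, hη.2, hsup]
    have hda : Λ.d a = Λ.d ρ := by
      have h1 : Λ.d mu + Λ.d a = Λ.d mu + Λ.d ρ := by
        rw [← hη.2, ← Λ.d_comp η a haη, haχ, hχd', hη.2]
      exact add_left_cancel h1
    have hdb : Λ.d b = Λ.d mu := by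
      have h1 : Λ.d ρ + Λ.d b = Λ.d ρ + Λ.d mu := by
        rw [← Λ.d_comp ρ b hbρ, hbχ, hχd', add_comm]
      exact add_left_cancel h1
    have hrb : Λ.r b = Λ.r ρ := by rw [← hbρ, ← hs]
    have hfb : Λ.d (Λ.comp ρ b) = Λ.d mu + Λ.d ρ := Λ.d_comp_rho ρ mu hs hrb hdb
    have : Λ.fpair (Λ.comp ρ b) (Λ.d mu) (Λ.d ρ) = (η, a) :=
      Λ.fpair_eq hfb hη.2 hda haη (by rw [haχ, hbχ])
    exact ⟨b, ⟨hrb, hdb⟩, congrArg Prod.fst this⟩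
  -- the induced bijection on F
  set g : ↥F → ↥F := fun ζ => ⟨σ ζ.1, hσF ζ.1 ζ.2⟩ with hgdef
  have hgsurj : Function.Surjective g := by
    rintro ⟨η, hη⟩
    obtain ⟨ζ, hζ, hζη⟩ := hσsurj η hη
    exact ⟨⟨ζ, hζ⟩, Subtype.ext hζη⟩
  have hginj : Function.Injective g := Finite.injective_iff_surjective.mpr hgsurj
  have hgval : ∀ (n : ℕ) (ζ : ↥F), (g^[n] ζ).1 = σ^[n] ζ.1 := by
    intro n
    induction n with
    | zero => intro ζ; rfl
    | succ n ih =>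
        intro ζ
        rw [Function.iterate_succ_apply, Function.iterate_succ_apply]
        exact ih (g ζ)
  -- factorisation of μλ through the cycle powers
  have preC : ∀ (n : ℕ) (lam : Λ.Path), Λ.r lam = Λ.s mu → Λ.d lam = n • Λ.d ρ →
      ∃ ζ ∈ F, Λ.comp mu lam = Λ.comp (Λ.cpow ρ n) ζ := by
    intro n lam hr hd
    have hcomp : Λ.d (Λ.comp mu lam) = n • Λ.d ρ + Λ.d mu := by
      rw [Λ.d_comp mu lam hr.symm, hd, add_comm]
    set q := Λ.fpair (Λ.comp mu lam) (n • Λ.d ρ) (Λ.d mu) with hq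
    obtain ⟨hq1, hq2, hq3, hq4⟩ := Λ.fpair_spec hcomp
    have hrq1 : Λ.r q.1 = Λ.r ρ := by
      rw [← Λ.r_comp q.1 q.2 hq3, hq4, Λ.r_comp mu lam hr.symm, hmu]
    have hq1eq : q.1 = Λ.cpow ρ n := Λ.cpow_unique ρ hs hnoent n q.1 hrq1 hq1
    have hrq2 : Λ.r q.2 = Λ.r ρ := by rw [← hq3, hq1eq, Λ.cpow_s ρ hs n]
    exact ⟨q.2, ⟨hrq2, hq2⟩, by rw [← hq4, hq1eq]⟩
  -- uniqueness core
  have uniqC : ∀ (n : ℕ), ∀ ζ ∈ F, ∀ lam : Λ.Path, Λ.r lam = Λ.s mu →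
      Λ.d lam = n • Λ.d ρ → Λ.comp mu lam = Λ.comp (Λ.cpow ρ n) ζ →
      σ^[n] ζ = mu := by
    intro n
    induction n with
    | zero =>
        intro ζ hζ lam hr hd heq
        have hd0 : Λ.d lam = 0 := by rw [hd, zero_smul]
        have hlam : lam = Λ.s mu := (Λ.r_vertex lam hd0).symm.trans hr
        have h1 : Λ.comp mu lam = mu := by rw [hlam, Λ.comp_id]
        have h2 : Λ.comp (Λ.cpow ρ 0) ζ = ζ := by
          show Λ.comp (Λ.r ρ) ζ = ζ
          rw [← hζ.1, Λ.id_comp]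
        show ζ = mu
        rw [← h2, ← heq, h1]
    | succ n ih =>
        intro ζ hζ lam hr hd heq
        obtain ⟨hs1, hs2, hs3, hs4⟩ := Λ.sig_spec ρ mu hs hζ.1 hζ.2
        set q2 := (Λ.fpair (Λ.comp ρ ζ) (Λ.d mu) (Λ.d ρ)).2 with hq2def
        have hdlam : Λ.d lam = n • Λ.d ρ + Λ.d ρ := by rw [hd, succ_nsmul]
        set p := Λ.fpair lam (n • Λ.d ρ) (Λ.d ρ) with hpdef
        obtain ⟨hp1, hp2, hp3, hp4⟩ := Λ.fpair_spec hdlam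
        have hrp1 : Λ.r p.1 = Λ.s mu := by
          rw [← hr, ← hp4, Λ.r_comp p.1 p.2 hp3]
        have hLHS : Λ.comp mu lam = Λ.comp (Λ.comp mu p.1) p.2 := by
          rw [← hp4, ← Λ.comp_assoc mu p.1 p.2 hrp1.symm hp3]
        have hcn : Λ.s (Λ.cpow ρ n) = Λ.r (σ ζ) := by
          rw [Λ.cpow_s ρ hs n, Λ.sig_r ρ mu hs hζ.1 hζ.2]
        have hcρ : Λ.s (Λ.cpow ρ n) = Λ.r ρ := Λ.cpow_s ρ hs n
        have hsρζ : Λ.s ρ = Λ.r ζ := by rw [hζ.1, ← hs]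
        have hRHS : Λ.comp (Λ.cpow ρ (n + 1)) ζ
            = Λ.comp (Λ.comp (Λ.cpow ρ n) (σ ζ)) q2 := by
          rw [Λ.cpow_succ' ρ hs n, Λ.comp_assoc (Λ.cpow ρ n) ρ ζ hcρ hsρζ, ← hs4,
            ← Λ.comp_assoc (Λ.cpow ρ n) (σ ζ) q2 hcn hs3]
        have heq2 : Λ.comp (Λ.comp mu p.1) p.2
            = Λ.comp (Λ.comp (Λ.cpow ρ n) (σ ζ)) q2 := by
          rw [← hLHS, heq, hRHS]
        have hdX : Λ.d (Λ.comp (Λ.comp mu p.1) p.2)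
            = (Λ.d mu + n • Λ.d ρ) + Λ.d ρ := by
          rw [Λ.d_comp _ p.2 (by rw [Λ.s_comp mu p.1 hrp1.symm, hp3]),
            Λ.d_comp mu p.1 hrp1.symm, hp1, hp2]
        obtain ⟨w, _, hu⟩ := Λ.factor _ _ _ hdX
        have h1 := hu (Λ.comp mu p.1, p.2)
          ⟨by rw [Λ.d_comp mu p.1 hrp1.symm, hp1], hp2,
            by rw [Λ.s_comp mu p.1 hrp1.symm, ← hp3], rfl⟩
        have h2 := hu (Λ.comp (Λ.cpow ρ n) (σ ζ), q2)
          ⟨by rw [Λ.d_comp _ _ hcn, Λ.cpow_d ρ hs n, hs1, add_comm], hs2,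
            by rw [Λ.s_comp _ _ hcn, ← hs3], heq2.symm⟩
        have hfst : Λ.comp mu p.1 = Λ.comp (Λ.cpow ρ n) (σ ζ) :=
          congrArg Prod.fst (h1.trans h2.symm)
        have := ih (σ ζ) (hσF ζ hζ) p.1 hrp1 hp1 hfst
        rw [Function.iterate_succ_apply]
        exact this
  -- existence core
  have exD : ∀ (n : ℕ), ∀ ζ ∈ F, ∃ lam : Λ.Path, Λ.r lam = Λ.s (σ^[n] ζ) ∧
      Λ.d lam = n • Λ.d ρ ∧ Λ.comp (σ^[n] ζ) lam = Λ.comp (Λ.cpow ρ n) ζ := by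
    intro n
    induction n with
    | zero =>
        intro ζ hζ
        refine ⟨Λ.s ζ, ?_, ?_, ?_⟩
        · exact Λ.r_vertex _ (Λ.d_s ζ)
        · rw [Λ.d_s, zero_smul]
        · show Λ.comp ζ (Λ.s ζ) = Λ.comp (Λ.r ρ) ζ
          rw [Λ.comp_id, ← hζ.1, Λ.id_comp]
    | succ n ih =>
        intro ζ hζ
        obtain ⟨hs1, hs2, hs3, hs4⟩ := Λ.sig_spec ρ mu hs hζ.1 hζ.2
        set q2 := (Λ.fpair (Λ.comp ρ ζ) (Λ.d mu) (Λ.d ρ)).2 with hq2def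
        obtain ⟨lam, hl1, hl2, hl3⟩ := ih (σ ζ) (hσF ζ hζ)
        have hcn : Λ.s (Λ.cpow ρ n) = Λ.r (σ ζ) := by
          rw [Λ.cpow_s ρ hs n, Λ.sig_r ρ mu hs hζ.1 hζ.2]
        have hcρ : Λ.s (Λ.cpow ρ n) = Λ.r ρ := Λ.cpow_s ρ hs n
        have hsρζ : Λ.s ρ = Λ.r ζ := by rw [hζ.1, ← hs]
        have hslam : Λ.s lam = Λ.r q2 := by
          rw [← Λ.s_comp _ lam hl1.symm, hl3, Λ.s_comp _ _ hcn, hs3]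
        have hit : σ^[n + 1] ζ = σ^[n] (σ ζ) := Function.iterate_succ_apply σ n ζ
        refine ⟨Λ.comp lam q2, ?_, ?_, ?_⟩
        · rw [Λ.r_comp lam q2 hslam, hl1, hit]
        · rw [Λ.d_comp lam q2 hslam, hl2, hs2, ← succ_nsmul]
        · rw [hit, ← Λ.comp_assoc _ lam q2 hl1.symm hslam, hl3,
            Λ.comp_assoc (Λ.cpow ρ n) (σ ζ) q2 hcn hs3, hs4,
            ← Λ.comp_assoc (Λ.cpow ρ n) ρ ζ hcρ hsρζ, ← Λ.cpow_succ' ρ hs n]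
  -- part 1: uniqueness statement
  have part1 : ∀ n : ℕ, ∃! lam : Λ.Path, Λ.r lam = Λ.s mu ∧ Λ.d lam = n • Λ.d ρ := by
    intro n
    obtain ⟨ζF, hζF⟩ := (hgsurj.iterate n) ⟨mu, hmuF⟩
    have hσn : σ^[n] ζF.1 = mu := by
      rw [← hgval n ζF, hζF]
    obtain ⟨lam₀, he1, he2, he3⟩ := exD n ζF.1 ζF.2
    rw [hσn] at he1 he3
    refine ⟨lam₀, ⟨he1, he2⟩, ?_⟩
    have key : ∀ lam : Λ.Path, Λ.r lam = Λ.s mu → Λ.d lam = n • Λ.d ρ →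
        ∃ ζ ∈ F, σ^[n] ζ = mu ∧ Λ.comp mu lam = Λ.comp (Λ.cpow ρ n) ζ := by
      intro lam hr hd
      obtain ⟨ζ, hζ, hζeq⟩ := preC n lam hr hd
      exact ⟨ζ, hζ, uniqC n ζ hζ lam hr hd hζeq, hζeq⟩
    intro lam hlam
    obtain ⟨ζ, hζ, hζmu, hζeq⟩ := key lam hlam.1 hlam.2
    obtain ⟨ζ', hζ', hζmu', hζeq'⟩ := key lam₀ he1 he2
    have hgg : g^[n] ⟨ζ, hζ⟩ = g^[n] ⟨ζ', hζ'⟩ := by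
      apply Subtype.ext
      rw [hgval n ⟨ζ, hζ⟩, hgval n ⟨ζ', hζ'⟩]
      exact hζmu.trans hζmu'.symm
    have hζζ' : ζ = ζ' := congrArg Subtype.val (hginj.iterate n hgg)
    have hcc : Λ.comp mu lam = Λ.comp mu lam₀ := by
      rw [hζeq, hζζ', ← hζeq']
    exact Λ.cancel_left hlam.1.symm he1.symm (hlam.2.trans he2.symm) hcc
  refine ⟨part1, ?_⟩
  -- part 2: the cycle
  obtain ⟨a, b, hab, hfab⟩ :=
    Finite.exists_ne_map_eq_of_infinite (fun n : ℕ => g^[n] (⟨mu, hmuF⟩ : ↥F))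
  wlog hab' : a < b generalizing a b
  · exact this b a hab.symm hfab.symm (by omega)
  set p := b - a with hp
  have hp1 : 1 ≤ p := by omega
  have hfix : g^[p] ⟨mu, hmuF⟩ = ⟨mu, hmuF⟩ := by
    have hba : b = a + p := by omega
    have h : g^[a] (g^[p] ⟨mu, hmuF⟩) = g^[a] ⟨mu, hmuF⟩ := by
      rw [← Function.iterate_add_apply, ← hba]
      exact hfab.symm
    exact hginj.iterate a h
  have hσp : σ^[p] mu = mu := by
    have h := congrArg Subtype.val hfix
    rw [hgval p ⟨mu, hmuF⟩] at h
    exact h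
  obtain ⟨lam₀, hl1, hl2, hl3⟩ := exD p mu hmuF
  rw [hσp] at hl1 hl3
  have hslam₀ : Λ.s lam₀ = Λ.s mu := by
    rw [← Λ.s_comp mu lam₀ hl1.symm, hl3,
      Λ.s_comp (Λ.cpow ρ p) mu (by rw [Λ.cpow_s ρ hs p, hmu])]
  refine ⟨p, hp1, ?_⟩
  intro lam hr hd
  have hlam : lam = lam₀ := by
    obtain ⟨x, hx, hxu⟩ := part1 p
    rw [hxu lam ⟨hr, hd⟩, hxu lam₀ ⟨hl1, hl2⟩]
  constructor
  · rw [hd]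
    intro h0
    apply hcyc.1
    funext i
    have hi := congrFun h0 i
    simp only [Pi.smul_apply, smul_eq_mul, Pi.zero_apply] at hi ⊢
    rcases Nat.mul_eq_zero.mp hi with h | h
    · omega
    · exact h
  · rw [hlam, hl1, ← hslam₀]
end
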